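/- arXiv:1209.5014 — 3 statements merged into one kernel-verified Lean document; each statement's English description precedes it below -/
import Mathlib

section
/- Let 𝒩 ⊂ ℤ be a set such that for some constant C > 0, ⟨n⟩ + ⟨k⟩ ≤ C⟨n−k⟩ for all n ∉ 𝒩 and k ∈ 𝒩, where ⟨x⟩ = (1+|x|²)^{1/2}. Let P be the L²(𝕋)-orthogonal projection onto the closed span of {e^{ikx} : k ∈ 𝒩}, let a ∈ C^∞(𝕋), and let p, q ∈ ℕ. Then there exists C' = C'(a,p,q) > 0 such that ‖∂_x^p [a, P] ∂_x^q v‖_{L²(𝕋)} ≤ C' ‖v‖_{L²(𝕋)} for all v ∈ L²(𝕋), where [a,P]v = a·(Pv) − P(a·v) is the commutator of multiplication by a with P. -/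
noncomputable section

lemma aux_summable_inv_one_add_sq : Summable (fun l : ℤ => (1 + (l : ℝ) ^ 2)⁻¹) := by
  have hg : Summable (fun l : ℤ => 1 / (l : ℝ) ^ 2 + (if l = 0 then (1:ℝ) else 0)) := by
    apply Summable.add
    · exact (Real.summable_one_div_int_pow (p := 2)).2 one_lt_two
    · exact summable_of_ne_finset_zero (s := {0}) (by intro b hb; simp at hb ⊢; exact hb)
  apply Summable.of_nonneg_of_le (fun l => by positivity) (fun l => ?_) hg
  rcases eq_or_ne l 0 with h | h
  · simp [h]
  · have hl : (1:ℝ) ≤ (l : ℝ) ^ 2 := by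
      have : (1:ℤ) ≤ l ^ 2 := by
        have := Int.one_le_abs (by simpa using h)
        nlinarith [sq_abs l]
      exact_mod_cast this
    simp only [h, if_false, add_zero, one_div]
    apply inv_anti₀ (by positivity)
    linarith

lemma aux_tsum_cauchy_schwarz {a b : ℤ → ℝ} (ha0 : ∀ k, 0 ≤ a k) (hb0 : ∀ k, 0 ≤ b k)
    (ha : Summable (fun k => a k ^ 2)) (hb : Summable (fun k => b k ^ 2)) :
    (∑' k, a k * b k) ^ 2 ≤ (∑' k, a k ^ 2) * ∑' k, b k ^ 2 := by
  have hab : Summable (fun k => a k * b k) := by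
    apply Summable.of_nonneg_of_le (fun k => mul_nonneg (ha0 k) (hb0 k))
      (fun k => ?_) ((ha.add hb).div_const 2)
    nlinarith [sq_nonneg (a k - b k)]
  have hX : 0 ≤ (∑' k, a k ^ 2) * ∑' k, b k ^ 2 :=
    mul_nonneg (tsum_nonneg fun k => sq_nonneg _) (tsum_nonneg fun k => sq_nonneg _)
  have h1 : (∑' k, a k * b k) ≤ Real.sqrt ((∑' k, a k ^ 2) * ∑' k, b k ^ 2) := by
    apply Summable.tsum_le_of_sum_le hab
    intro s
    have hcs := Finset.sum_mul_sq_le_sq_mul_sq s a b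
    calc ∑ i ∈ s, a i * b i
        = Real.sqrt ((∑ i ∈ s, a i * b i) ^ 2) :=
          (Real.sqrt_sq (Finset.sum_nonneg fun i _ => mul_nonneg (ha0 i) (hb0 i))).symm
      _ ≤ Real.sqrt ((∑ i ∈ s, a i ^ 2) * ∑ i ∈ s, b i ^ 2) := Real.sqrt_le_sqrt hcs
      _ ≤ Real.sqrt ((∑' k, a k ^ 2) * ∑' k, b k ^ 2) := by
          apply Real.sqrt_le_sqrt
          exact mul_le_mul (Summable.sum_le_tsum s (fun i _ => sq_nonneg _) ha)
            (Summable.sum_le_tsum s (fun i _ => sq_nonneg _) hb)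
            (Finset.sum_nonneg fun i _ => sq_nonneg _) (tsum_nonneg fun k => sq_nonneg _)
  calc (∑' k, a k * b k) ^ 2
      ≤ Real.sqrt ((∑' k, a k ^ 2) * ∑' k, b k ^ 2) ^ 2 :=
        pow_le_pow_left₀ (tsum_nonneg fun k => mul_nonneg (ha0 k) (hb0 k)) h1 2
    _ = _ := Real.sq_sqrt hX

lemma aux_tsum_cauchy_schwarz' {w u : ℤ → ℝ} (hw : ∀ k, 0 ≤ w k) (hu : ∀ k, 0 ≤ u k)
    (hws : Summable w) (hwu : Summable (fun k => w k * u k ^ 2)) :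
    (∑' k, w k * u k) ^ 2 ≤ (∑' k, w k) * ∑' k, w k * u k ^ 2 := by
  have h := aux_tsum_cauchy_schwarz (a := fun k => Real.sqrt (w k))
    (b := fun k => Real.sqrt (w k) * u k)
    (fun k => Real.sqrt_nonneg _) (fun k => mul_nonneg (Real.sqrt_nonneg _) (hu k))
    (hws.congr fun k => (Real.sq_sqrt (hw k)).symm)
    (hwu.congr fun k => by rw [mul_pow, Real.sq_sqrt (hw k)])
  have e1 : (fun k => Real.sqrt (w k) * (Real.sqrt (w k) * u k)) = fun k => w k * u k :=
    funext fun k => by rw [← mul_assoc, Real.mul_self_sqrt (hw k)]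
  have e2 : (fun k => Real.sqrt (w k) ^ 2) = w := funext fun k => Real.sq_sqrt (hw k)
  have e3 : (fun k => (Real.sqrt (w k) * u k) ^ 2) = fun k => w k * u k ^ 2 :=
    funext fun k => by rw [mul_pow, Real.sq_sqrt (hw k)]
  rw [e1, e2, e3] at h
  exact h

lemma aux_sep_pow (Cc : ℝ) (hC : 0 ≤ Cc) (p q : ℕ) (x y : ℝ)
    (h : Real.sqrt (1 + x ^ 2) + Real.sqrt (1 + y ^ 2) ≤ Cc * Real.sqrt (1 + (x - y) ^ 2)) :
    |x| ^ p * |y| ^ q ≤ Cc ^ (p + q) * Real.sqrt (1 + (x - y) ^ 2) ^ (p + q) := by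
  set a := Real.sqrt (1 + x ^ 2)
  set b := Real.sqrt (1 + y ^ 2)
  set c := Real.sqrt (1 + (x - y) ^ 2)
  have ha0 : 0 ≤ a := Real.sqrt_nonneg _
  have hb0 : 0 ≤ b := Real.sqrt_nonneg _
  have hxa : |x| ≤ a := by
    rw [← Real.sqrt_sq_eq_abs]
    exact Real.sqrt_le_sqrt (by linarith)
  have hyb : |y| ≤ b := by
    rw [← Real.sqrt_sq_eq_abs]
    exact Real.sqrt_le_sqrt (by linarith)
  calc |x| ^ p * |y| ^ q
      ≤ (a + b) ^ p * (a + b) ^ q := by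
        apply mul_le_mul (pow_le_pow_left₀ (abs_nonneg x) (by linarith) p)
          (pow_le_pow_left₀ (abs_nonneg y) (by linarith) q)
          (pow_nonneg (abs_nonneg y) q) (pow_nonneg (by linarith) p)
    _ = (a + b) ^ (p + q) := by rw [← pow_add]
    _ ≤ (Cc * c) ^ (p + q) := pow_le_pow_left₀ (by linarith) h _
    _ = Cc ^ (p + q) * c ^ (p + q) := mul_pow _ _ _

lemma aux_rpow_combine (z : ℝ) (hz : 0 < z) (p q : ℕ) :
    Real.sqrt z ^ (p + q) * z ^ (-((p + q + 2 : ℕ) : ℝ) / 2) = z⁻¹ := by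
  rw [Real.sqrt_eq_rpow, ← Real.rpow_natCast (z ^ (1/(2:ℝ))) (p + q), ← Real.rpow_mul hz.le,
    ← Real.rpow_add hz]
  rw [show (1/(2:ℝ)) * ((p + q : ℕ) : ℝ) + -((p + q + 2 : ℕ) : ℝ) / 2 = -1 by push_cast; ring]
  exact Real.rpow_neg_one z

/-- Fourier-side description of `∂_x^p [a,P] ∂_x^q v` at frequency `n`, where
`P` is the projection onto frequencies in `𝒩` and `a` has Fourier coefficients
`ahat`: `(∂_x^p [a,P] ∂_x^q v)^(n) = (in)^p Σ_k ahat (n-k) (ik)^q v k (1_𝒩(k) - 1_𝒩(n))`. -/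
def commutatorCoeff (N : Set ℤ) (ahat v : ℤ → ℂ) (p q : ℕ) (n : ℤ) : ℂ :=
  (Complex.I * n) ^ p *
    ∑' k : ℤ, ahat (n - k) * (Complex.I * k) ^ q * v k *
      (N.indicator (fun _ => (1 : ℂ)) k - N.indicator (fun _ => (1 : ℂ)) n)

set_option maxHeartbeats 1000000 in
/-- **Commutator lemma.** Let `𝒩 ⊆ ℤ` satisfy `⟨n⟩ + ⟨k⟩ ≤ C ⟨n-k⟩` for all
`n ∉ 𝒩`, `k ∈ 𝒩`, let `P` be the projection on the span of `{e^{ikx} : k ∈ 𝒩}`,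
and let `a ∈ C^∞(𝕋)` (equivalently, its Fourier coefficients `ahat` decay
faster than any polynomial).  Then for `p, q ∈ ℕ` there is `C' > 0` with
`‖∂_x^p [a,P] ∂_x^q v‖_{L²} ≤ C' ‖v‖_{L²}` for every `v ∈ L²(𝕋)`. -/
theorem commutator_estimate (N : Set ℤ) (C : ℝ) (hC : 0 < C)
    (hsep : ∀ n k : ℤ, n ∉ N → k ∈ N →
      Real.sqrt (1 + (n : ℝ) ^ 2) + Real.sqrt (1 + (k : ℝ) ^ 2)
        ≤ C * Real.sqrt (1 + ((n : ℝ) - (k : ℝ)) ^ 2))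
    (ahat : ℤ → ℂ)
    (hsmooth : ∀ m : ℕ, ∃ Cm : ℝ, 0 < Cm ∧ ∀ l : ℤ,
      ‖ahat l‖ ≤ Cm * (1 + (l : ℝ) ^ 2) ^ (-(m : ℝ) / 2))
    (p q : ℕ) :
    ∃ C' : ℝ, 0 < C' ∧ ∀ v : ℤ → ℂ,
      Summable (fun k : ℤ => ‖v k‖ ^ 2) →
      ∑' n : ℤ, ‖commutatorCoeff N ahat v p q n‖ ^ 2
        ≤ C' ^ 2 * ∑' k : ℤ, ‖v k‖ ^ 2 := by
  obtain ⟨Cm, hCm, hA⟩ := hsmooth (p + q + 2)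
  set W : ℤ → ℝ := fun l => C ^ (p + q) * Cm * (1 + (l : ℝ) ^ 2)⁻¹ with hWdef
  have hW0 : ∀ l : ℤ, 0 ≤ W l := fun l => by
    simp only [hWdef]; positivity
  have hWle : ∀ l : ℤ, W l ≤ C ^ (p + q) * Cm := by
    intro l
    simp only [hWdef]
    have h1 : (1 + (l : ℝ) ^ 2)⁻¹ ≤ 1 := by
      rw [inv_le_one_iff₀]
      right; nlinarith [sq_nonneg ((l : ℝ))]
    nlinarith [sq_nonneg ((l:ℝ)), pow_pos hC (p+q), mul_pos (pow_pos hC (p+q)) hCm]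
  have hWsum : Summable W := aux_summable_inv_one_add_sq.mul_left _
  set S : ℝ := ∑' l, W l with hSdef
  have hSpos : 0 < S := by
    apply Summable.tsum_pos hWsum hW0 0
    simp only [hWdef]
    positivity
  refine ⟨S, hSpos, ?_⟩
  intro v hv
  -- reindexing facts
  have hWre : ∀ n : ℤ, Summable (fun k : ℤ => W (n - k)) := fun n =>
    (Equiv.subLeft n).summable_iff.2 hWsum
  have hWre_eq : ∀ n : ℤ, (∑' k : ℤ, W (n - k)) = S := fun n =>
    (Equiv.subLeft n).tsum_eq W
  have hWre' : ∀ k : ℤ, Summable (fun n : ℤ => W (n - k)) := fun k =>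
    (Equiv.subRight k).summable_iff.2 hWsum
  have hWre'_eq : ∀ k : ℤ, (∑' n : ℤ, W (n - k)) = S := fun k =>
    (Equiv.subRight k).tsum_eq W
  have hWu2 : ∀ n : ℤ, Summable (fun k : ℤ => W (n - k) * ‖v k‖ ^ 2) := by
    intro n
    apply Summable.of_nonneg_of_le
      (fun k => mul_nonneg (hW0 _) (sq_nonneg _)) (fun k => ?_) (hv.mul_left (C ^ (p+q) * Cm))
    exact mul_le_mul_of_nonneg_right (hWle _) (sq_nonneg _)
  have hW2 : ∀ n : ℤ, Summable (fun k : ℤ => W (n - k) ^ 2) := by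
    intro n
    apply Summable.of_nonneg_of_le (fun k => sq_nonneg _) (fun k => ?_)
      ((hWre n).mul_left (C ^ (p+q) * Cm))
    calc W (n - k) ^ 2 = W (n - k) * W (n - k) := sq (W (n-k)) ▸ rfl
      _ ≤ (C ^ (p+q) * Cm) * W (n - k) := mul_le_mul_of_nonneg_right (hWle _) (hW0 _)
  have hsumh : ∀ n : ℤ, Summable (fun k : ℤ => W (n - k) * ‖v k‖) := by
    intro n
    apply Summable.of_nonneg_of_le
      (fun k => mul_nonneg (hW0 _) (norm_nonneg _)) (fun k => ?_)
      (((hW2 n).add hv).div_const 2)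
    nlinarith [sq_nonneg (W (n - k) - ‖v k‖), sq_abs (W (n-k))]
  -- the main scalar bound
  have main : ∀ n k : ℤ,
      (Real.sqrt (1 + (n : ℝ) ^ 2) + Real.sqrt (1 + (k : ℝ) ^ 2)
        ≤ C * Real.sqrt (1 + ((n : ℝ) - (k : ℝ)) ^ 2)) →
      |(n : ℝ)| ^ p * |(k : ℝ)| ^ q * ‖ahat (n - k)‖ ≤ W (n - k) := by
    intro n k hsep'
    have hz : (0 : ℝ) < 1 + ((n - k : ℤ) : ℝ) ^ 2 := by positivity
    have hcast : ((n - k : ℤ) : ℝ) = (n : ℝ) - (k : ℝ) := by push_cast; ring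
    have h1 := aux_sep_pow C hC.le p q (n : ℝ) (k : ℝ) hsep'
    have h2 := hA (n - k)
    calc |(n : ℝ)| ^ p * |(k : ℝ)| ^ q * ‖ahat (n - k)‖
        ≤ (C ^ (p + q) * Real.sqrt (1 + ((n : ℝ) - (k : ℝ)) ^ 2) ^ (p + q)) *
            (Cm * (1 + ((n - k : ℤ) : ℝ) ^ 2) ^ (-(((p + q + 2 : ℕ)) : ℝ) / 2)) := by
          apply mul_le_mul h1 h2 (norm_nonneg _) (by positivity)
      _ = C ^ (p + q) * Cm * (Real.sqrt (1 + ((n - k : ℤ) : ℝ) ^ 2) ^ (p + q) *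
            (1 + ((n - k : ℤ) : ℝ) ^ 2) ^ (-(((p + q + 2 : ℕ)) : ℝ) / 2)) := by
          rw [hcast]; ring
      _ = W (n - k) := by
          rw [aux_rpow_combine _ hz]
  -- pointwise bound on terms
  have key : ∀ n k : ℤ,
      ‖(Complex.I * (n : ℂ)) ^ p * (ahat (n - k) * (Complex.I * (k : ℂ)) ^ q * v k *
        (N.indicator (fun _ => (1 : ℂ)) k - N.indicator (fun _ => (1 : ℂ)) n))‖
      ≤ W (n - k) * ‖v k‖ := by
    intro n k
    have hrhs : 0 ≤ W (n - k) * ‖v k‖ :=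
      mul_nonneg (hW0 _) (norm_nonneg _)
    have habs : ∀ d : ℂ,
        ‖(Complex.I * (n : ℂ)) ^ p * (ahat (n - k) * (Complex.I * (k : ℂ)) ^ q * v k * d)‖
        = |(n : ℝ)| ^ p * |(k : ℝ)| ^ q * ‖ahat (n - k)‖ * ‖v k‖ *
            ‖d‖ := by
      intro d
      simp only [norm_mul, norm_pow, Complex.norm_I, Complex.norm_intCast, one_mul]
      ring
    by_cases hn : n ∈ N <;> by_cases hk : k ∈ N
    · rw [show (N.indicator (fun _ => (1 : ℂ)) k - N.indicator (fun _ => (1 : ℂ)) n) = 0 by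
        rw [Set.indicator_of_mem hk, Set.indicator_of_mem hn]; ring]
      simpa [habs] using hrhs
    · -- n ∈ N, k ∉ N
      have h0 := hsep k n hk hn
      have hsep' : Real.sqrt (1 + (n : ℝ) ^ 2) + Real.sqrt (1 + (k : ℝ) ^ 2)
          ≤ C * Real.sqrt (1 + ((n : ℝ) - (k : ℝ)) ^ 2) := by
        rw [show (1 + ((k : ℝ) - (n : ℝ)) ^ 2) = 1 + ((n : ℝ) - (k : ℝ)) ^ 2 by ring] at h0
        linarith
      rw [habs, show (N.indicator (fun _ => (1 : ℂ)) k - N.indicator (fun _ => (1 : ℂ)) n)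
          = -1 by rw [Set.indicator_of_notMem hk, Set.indicator_of_mem hn]; ring]
      rw [show ‖(-1 : ℂ)‖ = 1 by simp, mul_one]
      exact mul_le_mul_of_nonneg_right (main n k hsep') (norm_nonneg _)
    · -- n ∉ N, k ∈ N
      rw [habs, show (N.indicator (fun _ => (1 : ℂ)) k - N.indicator (fun _ => (1 : ℂ)) n)
          = 1 by rw [Set.indicator_of_mem hk, Set.indicator_of_notMem hn]; ring]
      rw [norm_one, mul_one]
      exact mul_le_mul_of_nonneg_right (main n k (hsep n k hn hk)) (norm_nonneg _)
    · rw [show (N.indicator (fun _ => (1 : ℂ)) k - N.indicator (fun _ => (1 : ℂ)) n) = 0 by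
        rw [Set.indicator_of_notMem hk, Set.indicator_of_notMem hn]; ring]
      simpa [habs] using hrhs
  -- coefficient bound
  have hcoeff : ∀ n : ℤ, ‖commutatorCoeff N ahat v p q n‖
      ≤ ∑' k : ℤ, W (n - k) * ‖v k‖ := by
    intro n
    set g : ℤ → ℂ := fun k => ahat (n - k) * (Complex.I * (k : ℂ)) ^ q * v k *
        (N.indicator (fun _ => (1 : ℂ)) k - N.indicator (fun _ => (1 : ℂ)) n) with hgdef
    have hcc : commutatorCoeff N ahat v p q n = (Complex.I * (n : ℂ)) ^ p * ∑' k, g k := rfl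
    set c : ℝ := ‖(Complex.I * (n : ℂ)) ^ p‖ with hcdef
    have hkey : ∀ k : ℤ, c * ‖g k‖ ≤ W (n - k) * ‖v k‖ := by
      intro k
      rw [hcdef, ← norm_mul]
      exact key n k
    rw [hcc, norm_mul, ← hcdef]
    by_cases hc : c = 0
    · rw [hc, zero_mul]
      exact tsum_nonneg fun k => mul_nonneg (hW0 _) (norm_nonneg _)
    · have hcpos : 0 < c := (norm_nonneg _).lt_of_ne (Ne.symm hc)
      have hgs : Summable (fun k => ‖g k‖) := by
        apply Summable.of_nonneg_of_le (fun k => norm_nonneg _) (fun k => ?_)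
          ((hsumh n).mul_left c⁻¹)
        rw [← inv_mul_cancel_left₀ hc (‖g k‖)] 
        exact mul_le_mul_of_nonneg_left (hkey k) (inv_nonneg.2 hcpos.le)
      have hgs' : Summable (fun k => ‖g k‖) := by simpa using hgs
      have hnorm : ‖∑' k, g k‖ ≤ ∑' k, ‖g k‖ := by
        have := norm_tsum_le_tsum_norm hgs'
        simpa using this
      calc c * ‖∑' k, g k‖ ≤ c * ∑' k, ‖g k‖ :=
            mul_le_mul_of_nonneg_left hnorm hcpos.le
        _ = ∑' k, c * ‖g k‖ := tsum_mul_left.symm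
        _ ≤ ∑' k, W (n - k) * ‖v k‖ :=
            Summable.tsum_le_tsum hkey (hgs.mul_left c) (hsumh n)
  -- squared per-n bound
  have hsq : ∀ n : ℤ, ‖commutatorCoeff N ahat v p q n‖ ^ 2
      ≤ S * ∑' k : ℤ, W (n - k) * ‖v k‖ ^ 2 := by
    intro n
    have h1 : ‖commutatorCoeff N ahat v p q n‖ ^ 2
        ≤ (∑' k : ℤ, W (n - k) * ‖v k‖) ^ 2 :=
      pow_le_pow_left₀ (norm_nonneg _) (hcoeff n) 2
    have h2 := aux_tsum_cauchy_schwarz' (w := fun k => W (n - k))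
      (u := fun k => ‖v k‖) (fun k => hW0 _)
      (fun k => norm_nonneg _) (hWre n) (hWu2 n)
    rw [hWre_eq n] at h2
    exact h1.trans h2
  -- conclude
  have hrhs0 : 0 ≤ S ^ 2 * ∑' k : ℤ, ‖v k‖ ^ 2 :=
    mul_nonneg (sq_nonneg _) (tsum_nonneg fun k => sq_nonneg _)
  apply tsum_le_of_sum_le' hrhs0
  intro s
  calc ∑ n ∈ s, ‖commutatorCoeff N ahat v p q n‖ ^ 2
      ≤ ∑ n ∈ s, S * ∑' k : ℤ, W (n - k) * ‖v k‖ ^ 2 :=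
        Finset.sum_le_sum fun n _ => hsq n
    _ = S * ∑ n ∈ s, ∑' k : ℤ, W (n - k) * ‖v k‖ ^ 2 := by rw [Finset.mul_sum]
    _ = S * ∑' k : ℤ, ∑ n ∈ s, W (n - k) * ‖v k‖ ^ 2 := by
        rw [Summable.tsum_finsetSum fun n _ => hWu2 n]
    _ ≤ S * ∑' k : ℤ, S * ‖v k‖ ^ 2 := by
        apply mul_le_mul_of_nonneg_left _ hSpos.le
        apply Summable.tsum_le_tsum _ (summable_sum fun n _ => hWu2 n) (hv.mul_left S)
        intro k
        rw [← Finset.sum_mul]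
        apply mul_le_mul_of_nonneg_right _ (sq_nonneg _)
        calc ∑ n ∈ s, W (n - k) ≤ ∑' n : ℤ, W (n - k) :=
              Summable.sum_le_tsum s (fun n _ => hW0 _) (hWre' k)
          _ = S := hWre'_eq k
    _ = S ^ 2 * ∑' k : ℤ, ‖v k‖ ^ 2 := by rw [tsum_mul_left]; ring
end
end

section
/- Let ε > 0 and let A be the operator Au = (ℋ − ε)u_xx on H⁰₀(𝕋) with domain H²₀(𝕋), where ℋ is the periodic Hilbert transform. Then the spectrum of A is {(ε + i·sgn(k))k² : k ∈ ℤ\{0}}, and for any θ₀ ∈ (arctan(ε⁻¹), π/2) there exists C > 0 such that for all λ ∈ ℂ with θ₀ < |arg λ| ≤ π, the resolvent bound ‖(A − λ)⁻¹‖ ≤ C/|λ| holds; in particular A is a sectorial operator on H⁰₀(𝕋). -/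
noncomputable section

/-- The Fourier symbol of the operator `A u = (ℋ - ε) u_xx` on mean-zero
functions on `𝕋`: at frequency `k`, `A` acts by multiplication by
`(ε + i sgn k) k²`. -/
def epsBOSymbol (ε : ℝ) (k : ℤ) : ℂ :=
  ((ε : ℂ) + Complex.I * (Int.sign k : ℂ)) * (k : ℂ) ^ 2

lemma epsBO_key_scalar (ε c₀ s₀ r x y : ℝ) (hε : 0 < ε) (hc₀ : 0 < c₀) (hs₀ : 0 < s₀)
    (hpyth : c₀^2 + s₀^2 = 1) (hks : c₀ < ε * s₀) (hr : 0 ≤ r)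
    (hxy : x^2 + y^2 = r^2) (hx : x ≤ r * c₀) :
    ε * x + |y| ≤ r * (ε * c₀ + s₀) := by
  rcases le_or_gt |y| (r * s₀) with h | h
  · nlinarith
  · have hy2 : |y|^2 = y^2 := sq_abs y
    have hy0 : 0 < |y| := (mul_nonneg hr hs₀.le).trans_lt h
    have hr0 : 0 < r := by nlinarith [mul_pos hy0 hy0]
    have h6 : x^2 < (r*c₀)^2 := by
      nlinarith [mul_self_lt_mul_self (mul_nonneg hr hs₀.le) h]
    have hx' : x < r * c₀ := lt_of_pow_lt_pow_left₀ 2 (mul_nonneg hr hc₀.le) h6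
    have h2 : r*c₀ + x < ε * (|y| + r*s₀) := by nlinarith [mul_pos (mul_pos hε hr0) hs₀]
    have h3 : (|y| - r*s₀) * (|y| + r*s₀) = (r*c₀ - x) * (r*c₀ + x) := by nlinarith
    have h4 : (r*c₀ - x) * (r*c₀ + x) ≤ (r*c₀ - x) * (ε * (|y| + r*s₀)) :=
      mul_le_mul_of_nonneg_left h2.le (by linarith)
    have h5 : 0 < |y| + r*s₀ := by positivity
    nlinarith [mul_pos (sub_pos.mpr hx') h5]

lemma epsBO_quad (ε t r B x y s : ℝ) (ht : 0 < t) (hs : s^2 = 1)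
    (hxy : x^2 + y^2 = r^2) (hexy : ε*x + s*y ≤ r*B) :
    r^2*(ε^2+1-B^2) ≤ (ε^2+1)*((ε*t-x)^2+(s*t-y)^2) := by
  have ht2 : s^2*t^2 = t^2 := by rw [hs, one_mul]
  nlinarith [sq_nonneg ((ε^2+1)*t - r*B), ht2,
    mul_le_mul_of_nonneg_left hexy (by positivity : (0:ℝ) ≤ 2*t*(ε^2+1))]

lemma epsBO_re (ε : ℝ) (k : ℤ) : (epsBOSymbol ε k).re = ε * (k:ℝ)^2 := by
  have ha : ((k:ℂ))^2 = ((k^2 : ℤ) : ℂ) := by push_cast; ring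
  rw [epsBOSymbol, ha]
  simp only [Complex.add_re, Complex.add_im, Complex.mul_re, Complex.mul_im,
    Complex.I_re, Complex.I_im, Complex.ofReal_re, Complex.ofReal_im,
    Complex.intCast_re, Complex.intCast_im]
  push_cast; ring

lemma epsBO_im (ε : ℝ) (k : ℤ) : (epsBOSymbol ε k).im = (Int.sign k : ℝ) * (k:ℝ)^2 := by
  have ha : ((k:ℂ))^2 = ((k^2 : ℤ) : ℂ) := by push_cast; ring
  rw [epsBOSymbol, ha]
  simp only [Complex.add_re, Complex.add_im, Complex.mul_re, Complex.mul_im,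
    Complex.I_re, Complex.I_im, Complex.ofReal_re, Complex.ofReal_im,
    Complex.intCast_re, Complex.intCast_im]
  push_cast; ring

lemma epsBO_sign_abs (k : ℤ) (hk : k ≠ 0) : |(Int.sign k : ℝ)| = 1 := by
  rcases hk.lt_or_gt with h | h
  · rw [Int.sign_eq_neg_one_iff_neg.mpr h]; norm_num
  · rw [Int.sign_eq_one_iff_pos.mpr h]; norm_num

lemma epsBO_sign_sq (k : ℤ) (hk : k ≠ 0) : ((Int.sign k : ℝ))^2 = 1 := by
  rw [← sq_abs, epsBO_sign_abs k hk]; norm_num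

lemma epsBO_abs_ge (ε : ℝ) (k : ℤ) (hk : k ≠ 0) :
    (k:ℝ)^2 ≤ ‖epsBOSymbol ε k‖ := by
  have h := Complex.abs_im_le_norm (epsBOSymbol ε k)
  rw [epsBO_im] at h
  rwa [abs_mul, epsBO_sign_abs k hk, one_mul, abs_of_nonneg (sq_nonneg _)] at h

/-- **Sectoriality of `A = (ℋ - ε)∂_x²` on `H⁰₀(𝕋)`.**  The operator acts
diagonally with symbol `(ε + i sgn k)k²`.  Its spectrum is exactly
`{(ε + i sgn k)k² : k ∈ ℤ, k ≠ 0}` (a point `λ` lies outside the spectrum iff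
the symbol stays uniformly away from `λ`), and for each
`θ₀ ∈ (arctan ε⁻¹, π/2)` there is `C > 0` such that for `θ₀ < |arg λ| ≤ π` the
resolvent bound `‖(A - λ)⁻¹‖ ≤ C/|λ|` holds, i.e. `|λ| ≤ C |symbol(k) - λ|`
for every `k ≠ 0`; in particular `A` is sectorial. -/
theorem epsBO_spectrum_and_sectorial (ε : ℝ) (hε : 0 < ε) :
    (∀ lam : ℂ,
      (¬ ∃ δ : ℝ, 0 < δ ∧ ∀ k : ℤ, k ≠ 0 → δ ≤ ‖epsBOSymbol ε k - lam‖) ↔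
        lam ∈ {z : ℂ | ∃ k : ℤ, k ≠ 0 ∧ z = epsBOSymbol ε k}) ∧
    (∀ θ₀ : ℝ, Real.arctan ε⁻¹ < θ₀ → θ₀ < Real.pi / 2 →
      ∃ C : ℝ, 0 < C ∧ ∀ lam : ℂ, θ₀ < |lam.arg| → |lam.arg| ≤ Real.pi →
        ∀ k : ℤ, k ≠ 0 →
          ‖lam‖ ≤ C * ‖epsBOSymbol ε k - lam‖) := by
  constructor
  · intro lam
    constructor
    · intro h
      by_contra hmem
      simp only [Set.mem_setOf_eq, not_exists, not_and] at hmem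
      apply h
      set R := ‖lam‖ with hR
      set N : ℤ := ⌈R⌉₊ + 1 with hN
      have hN1 : (1:ℤ) ≤ N := by omega
      have hNR : R + 1 ≤ (N:ℝ) := by
        have : R ≤ (⌈R⌉₊ : ℝ) := Nat.le_ceil R
        push_cast [hN]; linarith
      set S := (Finset.Icc (-N) N).erase 0 with hS
      have hS1 : (1:ℤ) ∈ S := by
        simp only [hS, Finset.mem_erase, Finset.mem_Icc]
        omega
      have hSne : S.Nonempty := ⟨1, hS1⟩
      set δ₀ := S.inf' hSne fun k => ‖epsBOSymbol ε k - lam‖ with hδ₀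
      refine ⟨min 1 δ₀, lt_min one_pos ?_, ?_⟩
      · rw [hδ₀, Finset.lt_inf'_iff]
        intro k hk
        have hk0 : k ≠ 0 := Finset.ne_of_mem_erase hk
        have hne : epsBOSymbol ε k - lam ≠ 0 := by
          intro hz
          exact hmem k hk0 (by rw [sub_eq_zero] at hz; exact hz.symm)
        exact norm_pos_iff.mpr hne
      · intro k hk
        rcases le_or_gt (|k|) N with hle | hgt
        · have hkS : k ∈ S := by
            simp only [hS, Finset.mem_erase, Finset.mem_Icc]
            exact ⟨hk, (abs_le.mp hle).1, (abs_le.mp hle).2⟩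
          exact le_trans (min_le_right _ _) (Finset.inf'_le _ hkS)
        · refine le_trans (min_le_left _ _) ?_
          have habs : (k:ℝ)^2 ≤ ‖epsBOSymbol ε k‖ := epsBO_abs_ge ε k hk
          have hk2 : R + 1 ≤ (k:ℝ)^2 := by
            have h1 : N + 1 ≤ |k| := by omega
            have h2 : ((N:ℝ) + 1) ≤ |(k:ℝ)| := by exact_mod_cast h1
            have h3 : (1:ℝ) ≤ |(k:ℝ)| := by linarith [hNR, hR ▸ norm_nonneg lam]
            have h4 : |(k:ℝ)| ≤ |(k:ℝ)|^2 := by nlinarith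
            have h5 : |(k:ℝ)|^2 = (k:ℝ)^2 := sq_abs _
            linarith
          have hd := norm_sub_norm_le (epsBOSymbol ε k) lam
          rw [← hR] at hd
          linarith
    · rintro ⟨k₀, hk₀, rfl⟩ ⟨δ, hδ, hbd⟩
      have h := hbd k₀ hk₀
      simp at h
      linarith
  · intro θ₀ hθ₁ hθ₂
    have hεinv : 0 < ε⁻¹ := by positivity
    have hα : 0 < Real.arctan ε⁻¹ := by
      rw [← Real.arctan_zero]
      exact Real.arctan_strictMono hεinv
    have hθ0 : 0 < θ₀ := hα.trans hθ₁
    have hc₀ : 0 < Real.cos θ₀ :=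
      Real.cos_pos_of_mem_Ioo ⟨by linarith [Real.pi_pos], hθ₂⟩
    have hs₀ : 0 < Real.sin θ₀ :=
      Real.sin_pos_of_pos_of_lt_pi hθ0 (by linarith [Real.pi_pos])
    have hpyth : (Real.cos θ₀)^2 + (Real.sin θ₀)^2 = 1 := by
      rw [add_comm]; exact Real.sin_sq_add_cos_sq θ₀
    have hks : Real.cos θ₀ < ε * Real.sin θ₀ := by
      have htan : ε⁻¹ < Real.tan θ₀ := by
        rw [← Real.tan_arctan ε⁻¹]
        exact Real.tan_lt_tan_of_lt_of_lt_pi_div_two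
          (by linarith [Real.pi_pos]) hθ₂ hθ₁
      rw [Real.tan_eq_sin_div_cos, lt_div_iff₀ hc₀] at htan
      calc Real.cos θ₀ = ε * (ε⁻¹ * Real.cos θ₀) := by field_simp
        _ < ε * Real.sin θ₀ := mul_lt_mul_of_pos_left htan hε
    have hB0 : 0 < ε * Real.cos θ₀ + Real.sin θ₀ := by positivity
    have hD2pos : 0 < ε^2 + 1 - (ε * Real.cos θ₀ + Real.sin θ₀)^2 := by
      nlinarith [pow_pos (sub_pos.mpr hks) 2]
    refine ⟨Real.sqrt ((ε^2+1)/(ε^2 + 1 - (ε * Real.cos θ₀ + Real.sin θ₀)^2)),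
      Real.sqrt_pos.mpr (by positivity), ?_⟩
    intro lam harg1 harg2 k hk
    have hr0 : 0 ≤ ‖lam‖ := norm_nonneg lam
    have hxy : lam.re^2 + lam.im^2 = (‖lam‖)^2 := by
      rw [Complex.sq_norm, Complex.normSq_apply]; ring
    have hxb : lam.re ≤ ‖lam‖ * Real.cos θ₀ := by
      have hcc : Real.cos |lam.arg| < Real.cos θ₀ :=
        Real.cos_lt_cos_of_nonneg_of_le_pi hθ0.le harg2 harg1
      rw [Real.cos_abs] at hcc
      have h1 : lam.re = ‖lam‖ * Real.cos lam.arg :=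
        (Complex.norm_mul_cos_arg lam).symm
      rw [h1]
      exact mul_le_mul_of_nonneg_left hcc.le hr0
    have hkey := epsBO_key_scalar ε (Real.cos θ₀) (Real.sin θ₀) (‖lam‖)
      lam.re lam.im hε hc₀ hs₀ hpyth hks hr0 hxy hxb
    have ht0 : 0 < ((k:ℝ))^2 := by
      have : (k:ℝ) ≠ 0 := Int.cast_ne_zero.mpr hk
      positivity
    have hs2 : ((Int.sign k : ℝ))^2 = 1 := epsBO_sign_sq k hk
    have hsy : (Int.sign k : ℝ) * lam.im ≤ |lam.im| := by
      calc (Int.sign k : ℝ) * lam.im ≤ |(Int.sign k : ℝ) * lam.im| := le_abs_self _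
        _ = |lam.im| := by rw [abs_mul, epsBO_sign_abs k hk, one_mul]
    have hexy : ε * lam.re + (Int.sign k : ℝ) * lam.im
        ≤ ‖lam‖ * (ε * Real.cos θ₀ + Real.sin θ₀) := by linarith
    have hm2 : (‖epsBOSymbol ε k - lam‖)^2
        = (ε*(k:ℝ)^2 - lam.re)^2 + ((Int.sign k : ℝ)*(k:ℝ)^2 - lam.im)^2 := by
      rw [Complex.sq_norm, Complex.normSq_apply, Complex.sub_re, Complex.sub_im,
        epsBO_re, epsBO_im]
      ring
    have hm0 : 0 ≤ ‖epsBOSymbol ε k - lam‖ := norm_nonneg _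
    have hmain := epsBO_quad ε ((k:ℝ)^2) (‖lam‖)
      (ε * Real.cos θ₀ + Real.sin θ₀) lam.re lam.im (Int.sign k : ℝ) ht0 hs2 hxy hexy
    rw [← hm2] at hmain
    have hsq : (‖lam‖)^2
        ≤ (Real.sqrt ((ε^2+1)/(ε^2 + 1 - (ε * Real.cos θ₀ + Real.sin θ₀)^2)) *
            ‖epsBOSymbol ε k - lam‖)^2 := by
      rw [mul_pow, Real.sq_sqrt (by positivity), div_mul_eq_mul_div, le_div_iff₀ hD2pos]
      nlinarith [hmain]
    calc ‖lam‖ = Real.sqrt ((‖lam‖)^2) := (Real.sqrt_sq hr0).symm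
      _ ≤ _ := Real.sqrt_le_sqrt hsq
      _ = _ := Real.sqrt_sq (by positivity)
end
end

section
/- Let a ∈ C^∞(𝕋) and s ∈ ℝ. Let G be the operator Gu = a·(u − ∫_𝕋 a(y)u(y)dy) (with ∫ a = 1). Then the commutator [(1−∂_x²)^{s/2}, G] is bounded from H^{s−1}(𝕋) to L²(𝕋): there exists C > 0 such that ‖[(1−∂_x²)^{s/2}, G]u‖_{L²(𝕋)} ≤ C‖u‖_{H^{s−1}(𝕋)}. -/
set_option maxHeartbeats 1000000
open scoped Real
noncomputable section

def wZ (k : ℤ) : ℝ := 1 + (k : ℝ) ^ 2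

lemma wZ_pos (k : ℤ) : 0 < wZ k := by unfold wZ; positivity
lemma one_le_wZ (k : ℤ) : 1 ≤ wZ k := by
  unfold wZ; nlinarith [sq_nonneg (k:ℝ)]
lemma wZ_neg (k : ℤ) : wZ (-k) = wZ k := by simp [wZ]
lemma wZ_sub_comm (n k : ℤ) : wZ (k - n) = wZ (n - k) := by
  rw [← wZ_neg (n - k)]; ring_nf
lemma wZ_peetre (n k : ℤ) : wZ n ≤ 2 * wZ (n - k) * wZ k := by
  simp only [wZ]; push_cast
  nlinarith [sq_nonneg ((n:ℝ) - 2*k), sq_nonneg ((n:ℝ)-k), sq_nonneg (k:ℝ), sq_nonneg (((n:ℝ)-k)*k)]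

lemma one_le_wZ_rpow {t : ℝ} (ht : 0 ≤ t) (k : ℤ) : 1 ≤ wZ k ^ t :=
  Real.one_le_rpow (one_le_wZ k) ht

lemma wZ_rpow_pos (t : ℝ) (k : ℤ) : 0 < wZ k ^ t := Real.rpow_pos_of_pos (wZ_pos k) t


/-- Peetre in rpow form. -/
lemma wZ_rpow_peetre (t : ℝ) (a b : ℤ) : wZ (a - b) ^ t ≤ (2 * wZ a * wZ b) ^ |t| := by
  rcases le_or_gt 0 t with ht | ht
  · rw [abs_of_nonneg ht]
    have h1 : wZ (a-b) ≤ 2 * wZ a * wZ b := by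
      have := wZ_peetre (a - b) (-b)
      simpa [wZ_neg, sub_neg_eq_add] using this
    exact Real.rpow_le_rpow (wZ_pos _).le h1 ht
  · rw [abs_of_neg ht]
    have h1 : wZ (a-b) ^ t ≤ 1 :=
      Real.rpow_le_one_of_one_le_of_nonpos (one_le_wZ _) ht.le
    have h2 : (1:ℝ) ≤ (2 * wZ a * wZ b) ^ (-t) :=
      Real.one_le_rpow (by nlinarith [one_le_wZ a, one_le_wZ b]) (by linarith)
    linarith

/-- transfer of weights between frequencies -/
lemma wZ_rpow_transfer (t : ℝ) (n k : ℤ) :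
    wZ n ^ t ≤ 2 ^ |t| * wZ (n - k) ^ |t| * wZ k ^ t := by
  rcases le_or_gt 0 t with ht | ht
  · rw [abs_of_nonneg ht]
    calc wZ n ^ t ≤ (2 * wZ (n-k) * wZ k) ^ t :=
          Real.rpow_le_rpow (wZ_pos n).le (wZ_peetre n k) ht
      _ = 2 ^ t * wZ (n-k) ^ t * wZ k ^ t := by
          rw [Real.mul_rpow (by nlinarith [wZ_pos (n-k)]) (wZ_pos k).le,
            Real.mul_rpow (by norm_num) (wZ_pos (n-k)).le]
  · rw [abs_of_neg ht]
    have h1 : wZ k / (2 * wZ (n - k)) ≤ wZ n := by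
      rw [div_le_iff₀ (by nlinarith [wZ_pos (n-k)] : (0:ℝ) < 2 * wZ (n-k))]
      calc wZ k ≤ 2 * wZ (k - n) * wZ n := wZ_peetre k n
        _ = wZ n * (2 * wZ (n-k)) := by rw [wZ_sub_comm]; ring
    have h2 : wZ n ^ t ≤ (wZ k / (2 * wZ (n-k))) ^ t :=
      Real.rpow_le_rpow_of_nonpos (div_pos (wZ_pos k) (by nlinarith [wZ_pos (n-k)])) h1 ht.le
    calc wZ n ^ t ≤ (wZ k / (2 * wZ (n-k))) ^ t := h2
      _ = 2 ^ (-t) * wZ (n-k) ^ (-t) * wZ k ^ t := by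
          rw [Real.div_rpow (wZ_pos k).le (by nlinarith [wZ_pos (n-k)] : (0:ℝ) ≤ 2 * wZ (n-k)),
            Real.mul_rpow (by norm_num) (wZ_pos (n-k)).le,
            Real.rpow_neg (by norm_num : (0:ℝ) ≤ 2), Real.rpow_neg (wZ_pos (n-k)).le]
          field_simp

/-- MVT estimate for rpow differences (ordered version, abs value form). -/
lemma rpow_sub_rpow_le' (p : ℝ) {x y : ℝ} (hx : 1 ≤ x) (hxy : x ≤ y) :
    |y ^ p - x ^ p| ≤ |p| * (y - x) * (x ^ (p - 1) + y ^ (p - 1)) := by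
  rcases eq_or_lt_of_le hxy with rfl | hlt
  · norm_num
  have hx0 : (0:ℝ) < x := lt_of_lt_of_le one_pos hx
  have hpos : ∀ z ∈ Set.Icc x y, (0:ℝ) < z := fun z hz => lt_of_lt_of_le hx0 hz.1
  have hderiv : ∀ z ∈ Set.Ioo x y, HasDerivAt (fun w : ℝ => w ^ p) (p * z ^ (p - 1)) z := by
    intro z hz
    exact Real.hasDerivAt_rpow_const (Or.inl (ne_of_gt (lt_trans hx0 hz.1)))
  have hcont : ContinuousOn (fun w : ℝ => w ^ p) (Set.Icc x y) := by
    intro z hz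
    exact (Real.continuousAt_rpow_const z p (Or.inl (ne_of_gt (hpos z hz)))).continuousWithinAt
  obtain ⟨c, hc, hceq⟩ := exists_hasDerivAt_eq_slope (fun w : ℝ => w ^ p)
    (fun z => p * z ^ (p - 1)) hlt hcont hderiv
  have hc1 : 1 ≤ c := le_trans hx hc.1.le
  have hc0 : (0:ℝ) < c := lt_of_lt_of_le one_pos hc1
  have heq : y ^ p - x ^ p = p * c ^ (p - 1) * (y - x) := by
    rw [eq_div_iff (ne_of_gt (by linarith : (0:ℝ) < y - x))] at hceq
    linarith
  have hcpn : (0:ℝ) ≤ c ^ (p-1) := (Real.rpow_pos_of_pos hc0 _).le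
  have habs : |y ^ p - x ^ p| = |p| * c ^ (p-1) * (y - x) := by
    rw [heq, abs_mul, abs_mul, abs_of_nonneg hcpn, abs_of_nonneg (by linarith : (0:ℝ) ≤ y - x)]
  rw [habs]
  have hcb : c ^ (p - 1) ≤ x ^ (p - 1) + y ^ (p - 1) := by
    rcases le_or_gt 0 (p - 1) with hp | hp
    · have : c ^ (p-1) ≤ y ^ (p-1) := Real.rpow_le_rpow hc0.le hc.2.le hp
      have hxnn : (0:ℝ) ≤ x ^ (p-1) := (Real.rpow_pos_of_pos hx0 _).le
      linarith
    · have : c ^ (p-1) ≤ x ^ (p-1) := Real.rpow_le_rpow_of_nonpos hx0 hc.1.le hp.le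
      have hynn : (0:ℝ) ≤ y ^ (p-1) := (Real.rpow_pos_of_pos (lt_of_lt_of_le hx0 hxy) _).le
      linarith
  have hpn : (0:ℝ) ≤ |p| := abs_nonneg p
  nlinarith [mul_le_mul_of_nonneg_left hcb (mul_nonneg hpn (by linarith : (0:ℝ) ≤ y - x))]

/-- symmetric version -/
lemma abs_rpow_sub_rpow (p : ℝ) {x y : ℝ} (hx : 1 ≤ x) (hy : 1 ≤ y) :
    |y ^ p - x ^ p| ≤ |p| * |y - x| * (x ^ (p - 1) + y ^ (p - 1)) := by
  rcases le_total x y with h | h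
  · rw [abs_of_nonneg (by linarith : (0:ℝ) ≤ y - x)]
    exact rpow_sub_rpow_le' p hx h
  · have h2 := rpow_sub_rpow_le' p hy h
    rw [abs_sub_comm, abs_sub_comm y x, abs_of_nonneg (by linarith : (0:ℝ) ≤ x - y)]
    have h3 : |p| * (x - y) * (y ^ (p-1) + x ^ (p-1)) = |p| * (x - y) * (x ^ (p-1) + y ^ (p-1)) := by
      ring
    linarith

/-- difference of weights bound -/
lemma wZ_diff (n k : ℤ) : |wZ n - wZ k| ≤ 3 * wZ (n - k) * wZ k ^ ((1:ℝ)/2) := by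
  set C := wZ k ^ ((1:ℝ)/2) with hCdef
  have hC1 : 1 ≤ C := one_le_wZ_rpow (by norm_num) k
  have hC2 : C ^ 2 = wZ k := by
    rw [hCdef, ← Real.rpow_natCast (wZ k ^ ((1:ℝ)/2)) 2, ← Real.rpow_mul (wZ_pos k).le]
    norm_num
  have hCk : |(k:ℝ)| ≤ C := by
    by_contra hcon
    push_neg at hcon
    have h1 : C ^ 2 < |(k:ℝ)| ^ 2 := by
      apply pow_lt_pow_left₀ hcon (by linarith) (by norm_num)
    rw [sq_abs, hC2] at h1
    simp only [wZ] at h1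
    linarith
  set e : ℝ := (n:ℝ) - (k:ℝ) with hedef
  have hwnk : wZ (n - k) = 1 + e ^ 2 := by rw [hedef]; simp only [wZ]; push_cast; ring
  have hdiff : wZ n - wZ k = e^2 + 2*e*(k:ℝ) := by rw [hedef]; simp only [wZ]; ring
  have habs : |wZ n - wZ k| ≤ e ^ 2 + 2 * |e| * |(k:ℝ)| := by
    rw [hdiff]
    have ha1 : |e ^ 2 + 2 * e * (k:ℝ)| ≤ |e ^ 2| + |2 * e * (k:ℝ)| := abs_add_le _ _
    have ha2 : |e ^ 2| = e ^ 2 := abs_of_nonneg (sq_nonneg e)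
    have ha3 : |2 * e * (k:ℝ)| = 2 * |e| * |(k:ℝ)| := by
      rw [abs_mul, abs_mul]; norm_num
    linarith
  have h2 : 2 * |e| * |(k:ℝ)| ≤ (e ^ 2 + 1) * C := by
    have ha : 2 * |e| * |(k:ℝ)| ≤ (e ^ 2 + 1) * |(k:ℝ)| := by
      nlinarith [sq_nonneg (|e| - 1), abs_nonneg (k:ℝ), sq_abs e]
    have hb : (e ^ 2 + 1) * |(k:ℝ)| ≤ (e ^ 2 + 1) * C :=
      mul_le_mul_of_nonneg_left hCk (by positivity)
    linarith
  have h3 : e ^ 2 ≤ (e ^ 2 + 1) * C := by nlinarith [sq_nonneg e]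
  rw [hwnk]
  nlinarith [sq_nonneg e, mul_nonneg (sub_nonneg.2 hC1) (by positivity : (0:ℝ) ≤ e ^ 2 + 1)]

/-- **Key pointwise commutator estimate.** -/
lemma keyA (s : ℝ) (n k : ℤ) :
    |wZ n ^ (s/2) - wZ k ^ (s/2)| ≤
      (3 * (|s/2| + 1) * 2 ^ (|s/2 - 1| + 1)) * wZ (n - k) ^ (1 + |s/2 - 1|)
        * wZ k ^ ((s-1)/2) := by
  set p := s/2 with hp
  have h0 := abs_rpow_sub_rpow p (one_le_wZ k) (one_le_wZ n)
  have hd := wZ_diff n k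
  have hpe := wZ_rpow_transfer (p - 1) n k
  have hfac : 1 ≤ 2 ^ |p - 1| * wZ (n-k) ^ |p - 1| := by
    have : (1:ℝ) ≤ (2:ℝ) ^ |p-1| := Real.one_le_rpow (by norm_num) (abs_nonneg _)
    nlinarith [one_le_wZ_rpow (abs_nonneg (p-1)) (n-k)]
  have hsum : wZ k ^ (p-1) + wZ n ^ (p-1) ≤
      2 * (2 ^ |p-1| * wZ (n-k) ^ |p-1|) * wZ k ^ (p-1) := by
    have h1 : wZ k ^ (p-1) ≤ (2 ^ |p-1| * wZ (n-k) ^ |p-1|) * wZ k ^ (p-1) := by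
      nlinarith [wZ_rpow_pos (p-1) k]
    nlinarith [wZ_rpow_pos (p-1) k, hpe]
  have hnn1 : (0:ℝ) ≤ |p| := abs_nonneg _
  have hnn2 : (0:ℝ) ≤ 3 * wZ (n-k) * wZ k ^ ((1:ℝ)/2) := by
    have := wZ_pos (n-k); have := wZ_rpow_pos ((1:ℝ)/2) k; nlinarith
  have hnn3 : (0:ℝ) ≤ wZ k ^ (p-1) + wZ n ^ (p-1) := by
    have := wZ_rpow_pos (p-1) k; have := wZ_rpow_pos (p-1) n; linarith
  have step : |wZ n ^ p - wZ k ^ p| ≤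
      |p| * (3 * wZ (n-k) * wZ k ^ ((1:ℝ)/2)) *
        (2 * (2 ^ |p-1| * wZ (n-k) ^ |p-1|) * wZ k ^ (p-1)) := by
    calc |wZ n ^ p - wZ k ^ p| ≤ |p| * |wZ n - wZ k| * (wZ k ^ (p-1) + wZ n ^ (p-1)) := h0
      _ ≤ |p| * (3 * wZ (n-k) * wZ k ^ ((1:ℝ)/2)) * (wZ k ^ (p-1) + wZ n ^ (p-1)) := by
          apply mul_le_mul_of_nonneg_right _ hnn3
          exact mul_le_mul_of_nonneg_left hd hnn1
      _ ≤ _ := by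
          apply mul_le_mul_of_nonneg_left hsum (mul_nonneg hnn1 hnn2)
  have hEq : |p| * (3 * wZ (n-k) * wZ k ^ ((1:ℝ)/2)) *
        (2 * (2 ^ |p-1| * wZ (n-k) ^ |p-1|) * wZ k ^ (p-1))
      = (3 * |p| * 2 ^ (|p - 1| + 1)) * wZ (n - k) ^ (1 + |p - 1|)
        * wZ k ^ ((s-1)/2) := by
    rw [Real.rpow_add (wZ_pos (n-k)), Real.rpow_one,
      Real.rpow_add (by norm_num : (0:ℝ) < 2), Real.rpow_one]
    rw [show (s-1)/2 = (1:ℝ)/2 + (p - 1) by rw [hp]; ring,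
      Real.rpow_add (wZ_pos k)]
    ring
  rw [hEq] at step
  have hfin : (3 * |p| * 2 ^ (|p - 1| + 1)) * wZ (n - k) ^ (1 + |p - 1|) * wZ k ^ ((s-1)/2)
      ≤ (3 * (|p| + 1) * 2 ^ (|p - 1| + 1)) * wZ (n - k) ^ (1 + |p - 1|) * wZ k ^ ((s-1)/2) := by
    have h2p : (0:ℝ) < (2:ℝ) ^ (|p-1|+1) := Real.rpow_pos_of_pos (by norm_num) _
    have hw1 := wZ_rpow_pos (1 + |p-1|) (n-k)
    have hw2 := wZ_rpow_pos ((s-1)/2) k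
    have hcc : 3 * |p| * 2 ^ (|p - 1| + 1) ≤ 3 * (|p| + 1) * 2 ^ (|p - 1| + 1) := by nlinarith
    exact mul_le_mul_of_nonneg_right (mul_le_mul_of_nonneg_right hcc hw1.le) hw2.le
  exact le_trans step hfin

/-! ### Summability machinery -/

lemma summable_wZ_inv : Summable (fun k : ℤ => (wZ k)⁻¹) := by
  have hnat : Summable (fun n : ℕ => (wZ (n : ℤ))⁻¹) := by
    have h2 : Summable (fun n : ℕ => 1 / ((n + 1 : ℕ) : ℝ) ^ 2) :=
      (summable_nat_add_iff (f := fun n : ℕ => 1 / (n:ℝ) ^ 2) 1).2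
        (Real.summable_one_div_nat_pow.2 one_lt_two)
    apply Summable.of_nonneg_of_le (fun n => inv_nonneg.2 (wZ_pos _).le) (fun n => ?_) (h2.mul_left 2)
    have h3 : ((n + 1 : ℕ) : ℝ) ^ 2 ≤ 2 * (1 + (n : ℝ) ^ 2) := by push_cast; nlinarith [sq_nonneg ((n:ℝ) - 1)]
    have h4 : (0:ℝ) < 1 + (n:ℝ)^2 := by positivity
    have h5 : (0:ℝ) < ((n + 1 : ℕ) : ℝ) ^ 2 := by positivity
    rw [show wZ (n : ℤ) = 1 + (n:ℝ)^2 by simp [wZ], inv_eq_one_div,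
      show 2 * (1 / (((n+1:ℕ):ℝ)) ^ 2) = 2 / (((n+1:ℕ):ℝ)) ^ 2 by ring,
      div_le_div_iff₀ h4 h5]
    nlinarith
  apply Summable.of_nat_of_neg
  · exact hnat
  · have : (fun n : ℕ => (wZ (-(n:ℤ)))⁻¹) = fun n : ℕ => (wZ (n:ℤ))⁻¹ := by
      funext n; rw [wZ_neg]
    rw [this]; exact hnat

/-- Cauchy–Schwarz for `tsum`s of nonnegative reals. -/
lemma tsum_cs {f g : ℤ → ℝ} (hf0 : ∀ k, 0 ≤ f k) (hg0 : ∀ k, 0 ≤ g k)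
    (hf : Summable (fun k => f k ^ 2)) (hg : Summable (fun k => g k ^ 2)) :
    Summable (fun k => f k * g k) ∧
    (∑' k, f k * g k) ^ 2 ≤ (∑' k, f k ^ 2) * (∑' k, g k ^ 2) := by
  have hsum : Summable (fun k => f k * g k) := by
    apply Summable.of_nonneg_of_le (fun k => mul_nonneg (hf0 k) (hg0 k))
      (fun k => ?_) ((hf.add hg).mul_left (1/2 : ℝ))
    nlinarith [sq_nonneg (f k - g k)]
  refine ⟨hsum, ?_⟩
  set A := ∑' k, f k ^ 2 with hA
  set B := ∑' k, g k ^ 2 with hB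
  have hA0 : 0 ≤ A := tsum_nonneg (fun k => sq_nonneg _)
  have hB0 : 0 ≤ B := tsum_nonneg (fun k => sq_nonneg _)
  have hAB : 0 ≤ A * B := mul_nonneg hA0 hB0
  have hle : ∑' k, f k * g k ≤ Real.sqrt (A * B) := by
    apply Summable.tsum_le_of_sum_le hsum
    intro sfin
    have h1 : (∑ i ∈ sfin, f i * g i) ^ 2 ≤ (∑ i ∈ sfin, f i ^ 2) * (∑ i ∈ sfin, g i ^ 2) :=
      Finset.sum_mul_sq_le_sq_mul_sq sfin f g
    have h2 : (∑ i ∈ sfin, f i ^ 2) ≤ A := Summable.sum_le_tsum sfin (fun i _ => sq_nonneg _) hf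
    have h3 : (∑ i ∈ sfin, g i ^ 2) ≤ B := Summable.sum_le_tsum sfin (fun i _ => sq_nonneg _) hg
    have hgs : (0:ℝ) ≤ ∑ i ∈ sfin, g i ^ 2 := Finset.sum_nonneg (fun i _ => sq_nonneg _)
    have h4 : (∑ i ∈ sfin, f i * g i) ^ 2 ≤ A * B :=
      le_trans h1 (mul_le_mul h2 h3 hgs hA0)
    have h5 := Real.sqrt_le_sqrt h4
    rwa [Real.sqrt_sq (Finset.sum_nonneg (fun i _ => mul_nonneg (hf0 i) (hg0 i)))] at h5
  calc (∑' k, f k * g k) ^ 2 ≤ Real.sqrt (A * B) ^ 2 :=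
        pow_le_pow_left₀ (tsum_nonneg (fun k => mul_nonneg (hf0 k) (hg0 k))) hle 2
    _ = A * B := Real.sq_sqrt hAB

/-- the shear equivalence on `ℤ × ℤ` -/
def shearZ : ℤ × ℤ ≃ ℤ × ℤ where
  toFun p := (p.1 - p.2, p.2)
  invFun p := (p.1 + p.2, p.2)
  left_inv p := by simp
  right_inv p := by simp

/-- **Young's inequality** `ℓ¹ * ℓ² → ℓ²` for convolutions on `ℤ`. -/
lemma young {b v : ℤ → ℝ} (hb0 : ∀ m, 0 ≤ b m) (hv0 : ∀ k, 0 ≤ v k)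
    (hb : Summable b) (hv : Summable (fun k => v k ^ 2)) :
    Summable (fun n => (∑' k, b (n - k) * v k) ^ 2) ∧
    ∑' n, (∑' k, b (n - k) * v k) ^ 2 ≤ (∑' m, b m) ^ 2 * ∑' k, v k ^ 2 := by
  set B := ∑' m, b m with hBdef
  set V := ∑' k, v k ^ 2 with hVdef
  have hB0 : 0 ≤ B := tsum_nonneg (fun m => hb0 m)
  have hV0 : 0 ≤ V := tsum_nonneg (fun m => sq_nonneg _)
  have hbB : ∀ m, b m ≤ B := fun m => Summable.le_tsum hb m (fun j _ => hb0 j)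
  have hshift : ∀ n : ℤ, Summable (fun k => b (n - k)) :=
    fun n => ((Equiv.subLeft n).summable_iff (f := b)).2 hb
  have hshift_sum : ∀ n : ℤ, (∑' k, b (n - k)) = B :=
    fun n => (Equiv.subLeft n).tsum_eq b
  have hbv2 : ∀ n, Summable (fun k => b (n - k) * v k ^ 2) := by
    intro n
    exact Summable.of_nonneg_of_le (fun k => mul_nonneg (hb0 _) (sq_nonneg _))
      (fun k => mul_le_mul_of_nonneg_right (hbB _) (sq_nonneg _)) (hv.mul_left B)
  have hCSn : ∀ n, (∑' k, b (n - k) * v k) ^ 2 ≤ B * (∑' k, b (n - k) * v k ^ 2) := by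
    intro n
    have ef : (fun k => Real.sqrt (b (n - k)) ^ 2) = fun k => b (n - k) :=
      funext (fun k => Real.sq_sqrt (hb0 _))
    have eg : (fun k => (Real.sqrt (b (n - k)) * v k) ^ 2) = fun k => b (n - k) * v k ^ 2 := by
      funext k; rw [mul_pow, Real.sq_sqrt (hb0 _)]
    have efg : (fun k => Real.sqrt (b (n - k)) * (Real.sqrt (b (n - k)) * v k)) =
        fun k => b (n - k) * v k := by
      funext k
      rw [← mul_assoc, Real.mul_self_sqrt (hb0 _)]
    obtain ⟨_, hcs⟩ := tsum_cs (f := fun k => Real.sqrt (b (n - k)))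
      (g := fun k => Real.sqrt (b (n - k)) * v k)
      (fun k => Real.sqrt_nonneg _) (fun k => mul_nonneg (Real.sqrt_nonneg _) (hv0 k))
      (by rw [ef]; exact hshift n) (by rw [eg]; exact hbv2 n)
    rw [efg, ef, eg, hshift_sum n] at hcs
    exact hcs
  have hG : Summable (fun p : ℤ × ℤ => b p.1 * v p.2 ^ 2) :=
    hb.mul_of_nonneg hv (fun m => hb0 m) (fun k => sq_nonneg _)
  have hF : Summable (fun p : ℤ × ℤ => b (p.1 - p.2) * v p.2 ^ 2) := by
    have := (shearZ.summable_iff (f := fun p : ℤ × ℤ => b p.1 * v p.2 ^ 2)).2 hG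
    exact this
  have hT : Summable (fun n => ∑' k, b (n - k) * v k ^ 2) :=
    ((summable_prod_of_nonneg (fun p => mul_nonneg (hb0 _) (sq_nonneg _))).1 hF).2
  have hFsum : ∑' p : ℤ × ℤ, b (p.1 - p.2) * v p.2 ^ 2 = B * V := by
    have hrw := shearZ.tsum_eq (fun p : ℤ × ℤ => b p.1 * v p.2 ^ 2)
    simp only [shearZ, Equiv.coe_fn_mk] at hrw
    rw [hrw, Summable.tsum_prod' hG (fun a => hv.mul_left (b a))]
    calc ∑' (a : ℤ), ∑' (c : ℤ), b a * v c ^ 2 = ∑' (a : ℤ), b a * V := by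
          apply tsum_congr; intro a; exact tsum_mul_left
      _ = B * V := by rw [tsum_mul_right]
  have hTsum : ∑' n, (∑' k, b (n - k) * v k ^ 2) = B * V := by
    rw [← Summable.tsum_prod' hF (fun n => hbv2 n)]
    exact hFsum
  have hP : Summable (fun n => (∑' k, b (n - k) * v k) ^ 2) :=
    Summable.of_nonneg_of_le (fun n => sq_nonneg _) (fun n => hCSn n) (hT.mul_left B)
  refine ⟨hP, ?_⟩
  calc ∑' n, (∑' k, b (n - k) * v k) ^ 2 ≤ ∑' n, B * (∑' k, b (n - k) * v k ^ 2) :=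
        Summable.tsum_le_tsum (fun n => hCSn n) hP (hT.mul_left B)
    _ = B * (B * V) := by rw [tsum_mul_left, hTsum]
    _ = B ^ 2 * V := by ring

/-! ### Rapid decay consequences -/

section Rapid
variable {ah : ℤ → ℂ}
  (hsmooth : ∀ m : ℕ, ∃ Cm : ℝ, 0 < Cm ∧ ∀ l : ℤ,
      ‖ah l‖ ≤ Cm * (1 + (l : ℝ) ^ 2) ^ (-(m : ℝ) / 2))

include hsmooth

lemma summable_rapid (t : ℝ) :
    Summable (fun m : ℤ => wZ m ^ t * ‖ah m‖) := by
  obtain ⟨Cm, hCm0, hCm⟩ := hsmooth (⌈2 * t + 2⌉₊)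
  set m₀ : ℕ := ⌈2 * t + 2⌉₊ with hm₀def
  have hm₀ : 2 * t + 2 ≤ (m₀ : ℝ) := Nat.le_ceil _
  apply Summable.of_nonneg_of_le
    (fun m => mul_nonneg (wZ_rpow_pos t m).le (norm_nonneg _))
    (fun m => ?_) (summable_wZ_inv.mul_left Cm)
  have h1 : wZ m ^ t * ‖ah m‖ ≤ wZ m ^ t * (Cm * wZ m ^ (-(m₀:ℝ)/2)) :=
    mul_le_mul_of_nonneg_left (hCm m) (wZ_rpow_pos t m).le
  have h2 : wZ m ^ t * wZ m ^ (-(m₀:ℝ)/2) = wZ m ^ (t - (m₀:ℝ)/2) := by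
    rw [← Real.rpow_add (wZ_pos m)]; congr 1; ring
  have h3 : wZ m ^ (t - (m₀:ℝ)/2) ≤ wZ m ^ (-1 : ℝ) :=
    Real.rpow_le_rpow_of_exponent_le (one_le_wZ m) (by linarith)
  have h4 : wZ m ^ (-1:ℝ) = (wZ m)⁻¹ := Real.rpow_neg_one _
  calc wZ m ^ t * ‖ah m‖ ≤ Cm * (wZ m ^ t * wZ m ^ (-(m₀:ℝ)/2)) := by
        rw [← mul_assoc, mul_comm (wZ m ^ t) Cm, mul_assoc] at h1; exact h1
    _ = Cm * wZ m ^ (t - (m₀:ℝ)/2) := by rw [h2]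
    _ ≤ Cm * (wZ m)⁻¹ := by
        rw [← h4]; exact mul_le_mul_of_nonneg_left h3 hCm0.le

lemma ah_bounded : ∃ C0 : ℝ, 0 < C0 ∧ ∀ m : ℤ, ‖ah m‖ ≤ C0 := by
  obtain ⟨C0, hC00, hC0⟩ := hsmooth 0
  refine ⟨C0, hC00, fun m => ?_⟩
  have := hC0 m
  simpa using this

lemma summable_rapid_sq (t : ℝ) :
    Summable (fun m : ℤ => wZ m ^ t * ‖ah m‖ ^ 2) := by
  obtain ⟨C0, hC00, hb⟩ := ah_bounded hsmooth
  apply Summable.of_nonneg_of_le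
    (fun m => mul_nonneg (wZ_rpow_pos t m).le (sq_nonneg _))
    (fun m => ?_) ((summable_rapid hsmooth t).mul_left C0)
  have h1 : ‖ah m‖ * ‖ah m‖ ≤ C0 * ‖ah m‖ :=
    mul_le_mul_of_nonneg_right (hb m) (norm_nonneg _)
  have h2 := mul_le_mul_of_nonneg_left h1 (wZ_rpow_pos t m).le
  calc wZ m ^ t * ‖ah m‖ ^ 2
      = wZ m ^ t * (‖ah m‖ * ‖ah m‖) := by ring
    _ ≤ wZ m ^ t * (C0 * ‖ah m‖) := h2
    _ = C0 * (wZ m ^ t * ‖ah m‖) := by ring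

lemma summable_ah_shift (t : ℝ) (n : ℤ) :
    Summable (fun k : ℤ => ‖ah (n - k)‖ * wZ k ^ t) := by
  have hcomp : Summable (fun m : ℤ => ‖ah m‖ * wZ (n - m) ^ t) := by
    apply Summable.of_nonneg_of_le
      (fun m => mul_nonneg (norm_nonneg _) (wZ_rpow_pos t _).le)
      (fun m => ?_) (((summable_rapid hsmooth |t|).mul_left ((2 * wZ n) ^ |t|)))
    have h1 : wZ (n - m) ^ t ≤ (2 * wZ n * wZ m) ^ |t| := wZ_rpow_peetre t n m
    have h2 : (2 * wZ n * wZ m) ^ |t| = (2 * wZ n) ^ |t| * wZ m ^ |t| :=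
      Real.mul_rpow (by nlinarith [wZ_pos n]) (wZ_pos m).le
    calc ‖ah m‖ * wZ (n - m) ^ t
        ≤ ‖ah m‖ * ((2 * wZ n) ^ |t| * wZ m ^ |t|) := by
          rw [← h2]; exact mul_le_mul_of_nonneg_left h1 (norm_nonneg _)
      _ = (2 * wZ n) ^ |t| * (wZ m ^ |t| * ‖ah m‖) := by ring
  have heq : (fun k : ℤ => ‖ah (n - k)‖ * wZ k ^ t) ∘ (Equiv.subLeft n)
      = fun m : ℤ => ‖ah m‖ * wZ (n - m) ^ t := by
    funext m
    simp [Equiv.subLeft, sub_sub_cancel]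
  exact ((Equiv.subLeft n).summable_iff).1 (by rw [heq]; exact hcomp)

lemma summable_ah_neg_sq (t : ℝ) :
    Summable (fun k : ℤ => wZ k ^ t * ‖ah (-k)‖ ^ 2) := by
  have h := ((Equiv.neg ℤ).summable_iff
      (f := fun m : ℤ => wZ m ^ t * ‖ah m‖ ^ 2)).2 (summable_rapid_sq hsmooth t)
  have heq : (fun m : ℤ => wZ m ^ t * ‖ah m‖ ^ 2) ∘ (Equiv.neg ℤ)
      = fun k : ℤ => wZ k ^ t * ‖ah (-k)‖ ^ 2 := by
    funext m
    simp only [Function.comp_apply, Equiv.neg_apply]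
    rw [wZ_neg]
  rwa [heq] at h

end Rapid

/-! ### Main theorem -/

open scoped ComplexConjugate

lemma wZ_eq (k : ℤ) : 1 + (k : ℝ) ^ 2 = wZ k := rfl

lemma wZ_rpow_sq (r : ℝ) (k : ℤ) : (wZ k ^ r) ^ 2 = wZ k ^ (2 * r) := by
  rw [← Real.rpow_natCast (wZ k ^ r) 2, ← Real.rpow_mul (wZ_pos k).le]
  congr 1
  push_cast; ring

lemma three_sq (a x y : ℝ) : (a + x + y) ^ 2 ≤ 3 * (a ^ 2 + x ^ 2 + y ^ 2) := by
  nlinarith [sq_nonneg (a - x), sq_nonneg (a - y), sq_nonneg (x - y)]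

/-- Fourier coefficients of the product `a·u`, where `ah` are the Fourier
coefficients of `a`: `(a u)^(n) = Σ_k ah (n-k) u k`. -/
def aconv (ah u : ℤ → ℂ) (n : ℤ) : ℂ := ∑' k : ℤ, ah (n - k) * u k

/-- The integral `∫_𝕋 a u dx = 2π Σ_k ah (-k) u k`. -/
def intAU (ah u : ℤ → ℂ) : ℂ := 2 * π * ∑' k : ℤ, ah (-k) * u k

/-- Fourier coefficients of `G u = a (u - ∫_𝕋 a u dy)`. -/
def Gcoef (ah u : ℤ → ℂ) (n : ℤ) : ℂ := aconv ah u n - intAU ah u * ah n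

/-- Fourier coefficients of the Bessel potential `(1-∂_x²)^{s/2} u`. -/
def Jpow (s : ℝ) (u : ℤ → ℂ) (n : ℤ) : ℂ := ((1 + (n : ℝ) ^ 2) ^ (s / 2) : ℝ) * u n

/-- The squared `H^s(𝕋)` norm through Fourier coefficients. -/
def hNormSq (s : ℝ) (u : ℤ → ℂ) : ℝ :=
  2 * π * ∑' k : ℤ, (1 + (k : ℝ) ^ 2) ^ s * ‖u k‖ ^ 2

/-- **Commutator smoothing estimate.**  For `a ∈ C^∞(𝕋)` with `∫_𝕋 a = 1`
(given through its rapidly decaying Fourier coefficients `ah`) and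
`G u = a(u - ∫ a u)`, the commutator `[(1-∂_x²)^{s/2}, G]` is bounded from
`H^{s-1}(𝕋)` to `L²(𝕋)`:  `‖[(1-∂_x²)^{s/2}, G]u‖_{L²} ≤ C ‖u‖_{H^{s-1}}`. -/
theorem bessel_commutator_estimate (ah : ℤ → ℂ)
    (hsmooth : ∀ m : ℕ, ∃ Cm : ℝ, 0 < Cm ∧ ∀ l : ℤ,
      ‖ah l‖ ≤ Cm * (1 + (l : ℝ) ^ 2) ^ (-(m : ℝ) / 2))
    (hmean : 2 * (π : ℂ) * ah 0 = 1) (s : ℝ) :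
    ∃ C : ℝ, 0 < C ∧ ∀ u : ℤ → ℂ,
      Summable (fun k : ℤ => (1 + (k : ℝ) ^ 2) ^ (s - 1) * ‖u k‖ ^ 2) →
      hNormSq 0 (fun n => Jpow s (Gcoef ah u) n - Gcoef ah (Jpow s u) n)
        ≤ C ^ 2 * hNormSq (s - 1) u := by
  classical
  have hπ : (0:ℝ) < π := Real.pi_pos
  -- constants depending only on `ah` and `s`
  set KA : ℝ := 3 * (|s/2| + 1) * 2 ^ (|s/2 - 1| + 1) with hKAdef
  set MA : ℝ := 1 + |s/2 - 1| with hMAdef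
  have hKA0 : 0 < KA := by
    have h2 : (0:ℝ) < 2 ^ (|s/2 - 1| + 1) := Real.rpow_pos_of_pos two_pos _
    have h3 := abs_nonneg (s/2)
    rw [hKAdef]; nlinarith
  set b : ℤ → ℝ := fun m => KA * (wZ m ^ MA * ‖ah m‖) with hbdef
  have hb0 : ∀ m, 0 ≤ b m := fun m =>
    mul_nonneg hKA0.le (mul_nonneg (wZ_rpow_pos _ _).le (norm_nonneg _))
  have hb : Summable b := (summable_rapid hsmooth MA).mul_left KA
  set B : ℝ := ∑' m, b m with hBdef
  have hB0 : 0 ≤ B := tsum_nonneg hb0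
  have hA1sum : Summable (fun n : ℤ => wZ n ^ s * ‖ah n‖ ^ 2) :=
    summable_rapid_sq hsmooth s
  set A1 : ℝ := ∑' n, wZ n ^ s * ‖ah n‖ ^ 2 with hA1def
  have hA1 : 0 ≤ A1 := tsum_nonneg (fun n => mul_nonneg (wZ_rpow_pos _ _).le (sq_nonneg _))
  have hA0sum : Summable (fun n : ℤ => ‖ah n‖ ^ 2) := by
    have h := summable_rapid_sq hsmooth 0
    simpa [Real.rpow_zero] using h
  set A0 : ℝ := ∑' n, ‖ah n‖ ^ 2 with hA0def
  have hA0 : 0 ≤ A0 := tsum_nonneg (fun n => sq_nonneg _)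
  have hE1sum : Summable (fun k : ℤ => wZ k ^ (1 - s) * ‖ah (-k)‖ ^ 2) :=
    summable_ah_neg_sq hsmooth (1 - s)
  set E1 : ℝ := ∑' k, wZ k ^ (1 - s) * ‖ah (-k)‖ ^ 2 with hE1def
  have hE10 : 0 ≤ E1 := tsum_nonneg (fun n => mul_nonneg (wZ_rpow_pos _ _).le (sq_nonneg _))
  have hE2sum : Summable (fun k : ℤ => wZ k ^ (1:ℝ) * ‖ah (-k)‖ ^ 2) :=
    summable_ah_neg_sq hsmooth 1
  set E2 : ℝ := ∑' k, wZ k ^ (1:ℝ) * ‖ah (-k)‖ ^ 2 with hE2def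
  have hE20 : 0 ≤ E2 := tsum_nonneg (fun n => mul_nonneg (wZ_rpow_pos _ _).le (sq_nonneg _))
  set C0 : ℝ := 3 * B^2 + 12 * π^2 * E1 * A1 + 12 * π^2 * E2 * A0 with hC0def
  have hC00 : 0 ≤ C0 := by
    have h1 : (0:ℝ) ≤ 3 * B^2 := by positivity
    have h2 : (0:ℝ) ≤ 12 * π^2 * E1 * A1 :=
      mul_nonneg (mul_nonneg (by positivity) hE10) hA1
    have h3 : (0:ℝ) ≤ 12 * π^2 * E2 * A0 :=
      mul_nonneg (mul_nonneg (by positivity) hE20) hA0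
    linarith
  refine ⟨Real.sqrt C0 + 1, by positivity, ?_⟩
  intro u hu
  have hu' : Summable (fun k : ℤ => wZ k ^ (s-1) * ‖u k‖ ^ 2) := by
    simpa only [wZ_eq] using hu
  set v : ℤ → ℝ := fun k => wZ k ^ ((s-1)/2) * ‖u k‖ with hvdef
  have hv0 : ∀ k, 0 ≤ v k := fun k =>
    mul_nonneg (wZ_rpow_pos _ _).le (norm_nonneg _)
  have hvsq : ∀ k, v k ^ 2 = wZ k ^ (s-1) * ‖u k‖ ^ 2 := by
    intro k
    rw [hvdef]
    dsimp only
    rw [mul_pow, wZ_rpow_sq, show (2:ℝ) * ((s-1)/2) = s - 1 by ring]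
  have hv2 : Summable (fun k => v k ^ 2) := by
    simp only [hvsq]; exact hu'
  set V : ℝ := ∑' k, v k ^ 2 with hVdef
  have hV0 : 0 ≤ V := tsum_nonneg (fun k => sq_nonneg _)
  have hvb : ∀ k, v k ≤ Real.sqrt V := by
    intro k
    have h1 : v k ^ 2 ≤ V := Summable.le_tsum hv2 k (fun j _ => sq_nonneg _)
    have h2 := Real.sqrt_le_sqrt h1
    rwa [Real.sqrt_sq (hv0 k)] at h2
  have hub : ∀ k, ‖u k‖ ≤ Real.sqrt V * wZ k ^ ((1-s)/2) := by
    intro k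
    have h1 : ‖u k‖ = wZ k ^ ((1-s)/2) * v k := by
      rw [hvdef]
      dsimp only
      rw [← mul_assoc, ← Real.rpow_add (wZ_pos k),
        show (1-s)/2 + (s-1)/2 = 0 by ring, Real.rpow_zero, one_mul]
    rw [h1, mul_comm (Real.sqrt V) _]
    exact mul_le_mul_of_nonneg_left (hvb k) (wZ_rpow_pos _ _).le
  have habsJ : ∀ k, ‖Jpow s u k‖ = wZ k ^ (s/2) * ‖u k‖ := by
    intro k
    simp only [Jpow, wZ_eq]
    rw [norm_mul, Complex.norm_real, Real.norm_eq_abs, abs_of_nonneg (wZ_rpow_pos (s/2) k).le]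
  -- summability of the inner series
  have hS1 : ∀ n, Summable (fun k => ah (n - k) * u k) := by
    intro n
    apply Summable.of_norm
    apply Summable.of_nonneg_of_le (fun k => norm_nonneg _) (fun k => ?_)
      ((summable_ah_shift hsmooth ((1-s)/2) n).mul_left (Real.sqrt V))
    rw [norm_mul]
    calc ‖ah (n-k)‖ * ‖u k‖
        ≤ ‖ah (n-k)‖ * (Real.sqrt V * wZ k ^ ((1-s)/2)) :=
          mul_le_mul_of_nonneg_left (hub k) (norm_nonneg _)
      _ = Real.sqrt V * (‖ah (n-k)‖ * wZ k ^ ((1-s)/2)) := by ring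
  have hS2 : ∀ n, Summable (fun k => ah (n - k) * Jpow s u k) := by
    intro n
    apply Summable.of_norm
    apply Summable.of_nonneg_of_le (fun k => norm_nonneg _) (fun k => ?_)
      ((summable_ah_shift hsmooth ((1:ℝ)/2) n).mul_left (Real.sqrt V))
    rw [norm_mul, habsJ k]
    have h1 : wZ k ^ (s/2) * ‖u k‖
        ≤ wZ k ^ (s/2) * (Real.sqrt V * wZ k ^ ((1-s)/2)) :=
      mul_le_mul_of_nonneg_left (hub k) (wZ_rpow_pos _ _).le
    have h2 : wZ k ^ (s/2) * wZ k ^ ((1-s)/2) = wZ k ^ ((1:ℝ)/2) := by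
      rw [← Real.rpow_add (wZ_pos k)]
      congr 1; ring
    calc ‖ah (n-k)‖ * (wZ k ^ (s/2) * ‖u k‖)
        ≤ ‖ah (n-k)‖ * (wZ k ^ (s/2) * (Real.sqrt V * wZ k ^ ((1-s)/2))) :=
          mul_le_mul_of_nonneg_left h1 (norm_nonneg _)
      _ = Real.sqrt V * (‖ah (n-k)‖ * (wZ k ^ (s/2) * wZ k ^ ((1-s)/2))) := by ring
      _ = Real.sqrt V * (‖ah (n-k)‖ * wZ k ^ ((1:ℝ)/2)) := by rw [h2]
  have hSI : Summable (fun k => ah (-k) * u k) := by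
    have h := hS1 0
    simpa using h
  have hSJ : Summable (fun k => ah (-k) * Jpow s u k) := by
    have h := hS2 0
    simpa using h
  -- per-n shifted summability of b(n-·) v ·
  have hsb : ∀ n, Summable (fun k => b (n - k) * v k) := by
    intro n
    have hshiftb : Summable (fun k => b (n - k)) :=
      ((Equiv.subLeft n).summable_iff (f := b)).2 hb
    apply Summable.of_nonneg_of_le (fun k => mul_nonneg (hb0 _) (hv0 _))
      (fun k => mul_le_mul_of_nonneg_left (hvb k) (hb0 _)) (hshiftb.mul_right (Real.sqrt V))
  set P : ℤ → ℝ := fun n => ∑' k, b (n - k) * v k with hPdef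
  have hP0 : ∀ n, 0 ≤ P n := fun n => tsum_nonneg (fun k => mul_nonneg (hb0 _) (hv0 _))
  -- the commutator main term as a single series
  have hDn : ∀ n, ((wZ n ^ (s/2) : ℝ) : ℂ) * aconv ah u n - aconv ah (Jpow s u) n
      = ∑' k, ah (n - k) * (((wZ n ^ (s/2) : ℝ) : ℂ) - ((wZ k ^ (s/2) : ℝ) : ℂ)) * u k := by
    intro n
    unfold aconv
    rw [← tsum_mul_left, ← Summable.tsum_sub ((hS1 n).mul_left _) (hS2 n)]
    apply tsum_congr
    intro k
    simp only [Jpow, wZ_eq]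
    push_cast
    ring
  -- bound on the main term
  have hDabs : ∀ n, ‖∑' k, ah (n - k) *
      (((wZ n ^ (s/2) : ℝ) : ℂ) - ((wZ k ^ (s/2) : ℝ) : ℂ)) * u k‖ ≤ P n := by
    intro n
    have hterm : ∀ k, ‖ah (n - k) * (((wZ n ^ (s/2) : ℝ) : ℂ) - ((wZ k ^ (s/2) : ℝ) : ℂ)) * u k‖
        ≤ b (n - k) * v k := by
      intro k
      rw [norm_mul, norm_mul,
        ← Complex.ofReal_sub, Complex.norm_real, Real.norm_eq_abs]
      have hkey := keyA s n k
      calc ‖ah (n-k)‖ * |wZ n ^ (s/2) - wZ k ^ (s/2)| * ‖u k‖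
          ≤ ‖ah (n-k)‖ *
            (KA * wZ (n-k) ^ MA * wZ k ^ ((s-1)/2)) * ‖u k‖ := by
            apply mul_le_mul_of_nonneg_right _ (norm_nonneg _)
            exact mul_le_mul_of_nonneg_left hkey (norm_nonneg _)
        _ = b (n - k) * v k := by
            rw [hbdef, hvdef]
            dsimp only
            ring
    have hnorm : Summable (fun k => ‖ah (n - k) *
        (((wZ n ^ (s/2) : ℝ) : ℂ) - ((wZ k ^ (s/2) : ℝ) : ℂ)) * u k‖) :=
      Summable.of_nonneg_of_le (fun k => norm_nonneg _) hterm (hsb n)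
    calc ‖∑' k, ah (n - k) *
          (((wZ n ^ (s/2) : ℝ) : ℂ) - ((wZ k ^ (s/2) : ℝ) : ℂ)) * u k‖
        = ‖∑' k, ah (n - k) * (((wZ n ^ (s/2) : ℝ) : ℂ) - ((wZ k ^ (s/2) : ℝ) : ℂ)) * u k‖ :=
          rfl
      _ ≤ ∑' k, ‖ah (n - k) * (((wZ n ^ (s/2) : ℝ) : ℂ) - ((wZ k ^ (s/2) : ℝ) : ℂ)) * u k‖ :=
          norm_tsum_le_tsum_norm hnorm
      _ ≤ P n := Summable.tsum_le_tsum hterm hnorm (hsb n)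
  -- bounds on the rank-one corrections
  have habs2π : ∀ z : ℂ, ‖2 * (π:ℂ) * z‖ = 2 * π * ‖z‖ := by
    intro z
    rw [norm_mul, norm_mul]
    simp [abs_of_pos hπ]
  have hIbound : ‖intAU ah u‖ ^ 2 ≤ 4 * π^2 * E1 * V := by
    set f1 : ℤ → ℝ := fun k => wZ k ^ ((1-s)/2) * ‖ah (-k)‖ with hf1def
    have hf10 : ∀ k, 0 ≤ f1 k := fun k =>
      mul_nonneg (wZ_rpow_pos _ _).le (norm_nonneg _)
    have hf1sqeq : ∀ k, f1 k ^ 2 = wZ k ^ (1-s) * ‖ah (-k)‖ ^ 2 := by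
      intro k
      rw [hf1def]; dsimp only
      rw [mul_pow, wZ_rpow_sq, show (2:ℝ) * ((1-s)/2) = 1 - s by ring]
    have hf1sq : Summable (fun k => f1 k ^ 2) := by
      simp only [hf1sqeq]; exact hE1sum
    have hfv : ∀ k, ‖ah (-k)‖ * ‖u k‖ = f1 k * v k := by
      intro k
      have h1 : wZ k ^ ((1-s)/2) * wZ k ^ ((s-1)/2) = 1 := by
        rw [← Real.rpow_add (wZ_pos k), show (1-s)/2 + (s-1)/2 = 0 by ring, Real.rpow_zero]
      calc ‖ah (-k)‖ * ‖u k‖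
          = (wZ k ^ ((1-s)/2) * wZ k ^ ((s-1)/2)) * (‖ah (-k)‖ * ‖u k‖) := by
            rw [h1, one_mul]
        _ = f1 k * v k := by rw [hf1def, hvdef]; dsimp only; ring
    obtain ⟨hcs_sum, hcs⟩ := tsum_cs hf10 hv0 hf1sq hv2
    have hE1eq : ∑' k, f1 k ^ 2 = E1 := by
      rw [hE1def]; exact tsum_congr hf1sqeq
    have hnorm1 : Summable (fun k => ‖ah (-k) * u k‖) := by
      apply Summable.of_nonneg_of_le (fun k => norm_nonneg _) (fun k => ?_) hcs_sum
      rw [norm_mul]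
      exact le_of_eq (hfv k)
    have habsI : ‖intAU ah u‖ ≤ 2 * π * ∑' k, f1 k * v k := by
      unfold intAU
      rw [habs2π]
      apply mul_le_mul_of_nonneg_left _ (by positivity)
      calc ‖∑' k, ah (-k) * u k‖ = ‖∑' k, ah (-k) * u k‖ := rfl
        _ ≤ ∑' k, ‖ah (-k) * u k‖ := norm_tsum_le_tsum_norm hnorm1
        _ ≤ ∑' k, f1 k * v k := by
            apply Summable.tsum_le_tsum _ hnorm1 hcs_sum
            intro k
            rw [norm_mul]
            exact le_of_eq (hfv k)
    have hcsv : (∑' k, f1 k * v k) ^ 2 ≤ E1 * V := by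
      rw [← hE1eq, hVdef]; exact hcs
    have h0 : 0 ≤ ∑' k, f1 k * v k := tsum_nonneg (fun k => mul_nonneg (hf10 k) (hv0 k))
    calc ‖intAU ah u‖ ^ 2 ≤ (2 * π * ∑' k, f1 k * v k) ^ 2 :=
          pow_le_pow_left₀ (norm_nonneg _) habsI 2
      _ = 4 * π^2 * (∑' k, f1 k * v k) ^ 2 := by ring
      _ ≤ 4 * π^2 * (E1 * V) := by
          apply mul_le_mul_of_nonneg_left hcsv (by positivity)
      _ = 4 * π^2 * E1 * V := by ring
  have hJbound : ‖intAU ah (Jpow s u)‖ ^ 2 ≤ 4 * π^2 * E2 * V := by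
    set f2 : ℤ → ℝ := fun k => wZ k ^ ((1:ℝ)/2) * ‖ah (-k)‖ with hf2def
    have hf20 : ∀ k, 0 ≤ f2 k := fun k =>
      mul_nonneg (wZ_rpow_pos _ _).le (norm_nonneg _)
    have hf2sqeq : ∀ k, f2 k ^ 2 = wZ k ^ (1:ℝ) * ‖ah (-k)‖ ^ 2 := by
      intro k
      rw [hf2def]; dsimp only
      rw [mul_pow, wZ_rpow_sq, show (2:ℝ) * ((1:ℝ)/2) = (1:ℝ) by ring]
    have hf2sq : Summable (fun k => f2 k ^ 2) := by
      simp only [hf2sqeq]; exact hE2sum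
    have hfv : ∀ k, ‖ah (-k)‖ * ‖Jpow s u k‖ = f2 k * v k := by
      intro k
      rw [habsJ k]
      have h1 : wZ k ^ ((1:ℝ)/2) * wZ k ^ ((s-1)/2) = wZ k ^ (s/2) := by
        rw [← Real.rpow_add (wZ_pos k)]
        congr 1; ring
      calc ‖ah (-k)‖ * (wZ k ^ (s/2) * ‖u k‖)
          = (wZ k ^ ((1:ℝ)/2) * wZ k ^ ((s-1)/2)) * (‖ah (-k)‖ * ‖u k‖) := by
            rw [h1]; ring
        _ = f2 k * v k := by rw [hf2def, hvdef]; dsimp only; ring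
    obtain ⟨hcs_sum, hcs⟩ := tsum_cs hf20 hv0 hf2sq hv2
    have hE2eq : ∑' k, f2 k ^ 2 = E2 := by
      rw [hE2def]; exact tsum_congr hf2sqeq
    have hnorm1 : Summable (fun k => ‖ah (-k) * Jpow s u k‖) := by
      apply Summable.of_nonneg_of_le (fun k => norm_nonneg _) (fun k => ?_) hcs_sum
      rw [norm_mul]
      exact le_of_eq (hfv k)
    have habsI : ‖intAU ah (Jpow s u)‖ ≤ 2 * π * ∑' k, f2 k * v k := by
      unfold intAU
      rw [habs2π]
      apply mul_le_mul_of_nonneg_left _ (by positivity)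
      calc ‖∑' k, ah (-k) * Jpow s u k‖
          = ‖∑' k, ah (-k) * Jpow s u k‖ := rfl
        _ ≤ ∑' k, ‖ah (-k) * Jpow s u k‖ := norm_tsum_le_tsum_norm hnorm1
        _ ≤ ∑' k, f2 k * v k := by
            apply Summable.tsum_le_tsum _ hnorm1 hcs_sum
            intro k
            rw [norm_mul]
            exact le_of_eq (hfv k)
    have hcsv : (∑' k, f2 k * v k) ^ 2 ≤ E2 * V := by
      rw [← hE2eq, hVdef]; exact hcs
    calc ‖intAU ah (Jpow s u)‖ ^ 2 ≤ (2 * π * ∑' k, f2 k * v k) ^ 2 :=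
          pow_le_pow_left₀ (norm_nonneg _) habsI 2
      _ = 4 * π^2 * (∑' k, f2 k * v k) ^ 2 := by ring
      _ ≤ 4 * π^2 * (E2 * V) := by
          apply mul_le_mul_of_nonneg_left hcsv (by positivity)
      _ = 4 * π^2 * E2 * V := by ring
  -- decompose the commutator
  have hcn : ∀ n, Jpow s (Gcoef ah u) n - Gcoef ah (Jpow s u) n
      = (((wZ n ^ (s/2) : ℝ) : ℂ) * aconv ah u n - aconv ah (Jpow s u) n)
        - intAU ah u * (((wZ n ^ (s/2) : ℝ) : ℂ) * ah n) + intAU ah (Jpow s u) * ah n := by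
    intro n
    simp only [Jpow, Gcoef, wZ_eq]
    ring
  -- pointwise bound
  have hcb : ∀ n, ‖Jpow s (Gcoef ah u) n - Gcoef ah (Jpow s u) n‖
      ≤ P n + ‖intAU ah u‖ * (wZ n ^ (s/2) * ‖ah n‖)
        + ‖intAU ah (Jpow s u)‖ * ‖ah n‖ := by
    intro n
    rw [hcn n, hDn n]
    set D := ∑' k, ah (n - k) * (((wZ n ^ (s/2) : ℝ) : ℂ) - ((wZ k ^ (s/2) : ℝ) : ℂ)) * u k
    have ht1 : ‖D - intAU ah u * (((wZ n ^ (s/2) : ℝ) : ℂ) * ah n)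
          + intAU ah (Jpow s u) * ah n‖
        ≤ ‖D‖ + ‖intAU ah u * (((wZ n ^ (s/2) : ℝ) : ℂ) * ah n)‖
          + ‖intAU ah (Jpow s u) * ah n‖ := by
      calc ‖D - intAU ah u * (((wZ n ^ (s/2) : ℝ) : ℂ) * ah n) + intAU ah (Jpow s u) * ah n‖
          ≤ ‖D - intAU ah u * (((wZ n ^ (s/2) : ℝ) : ℂ) * ah n)‖ + ‖intAU ah (Jpow s u) * ah n‖ :=
            norm_add_le _ _
        _ ≤ ‖D‖ + ‖intAU ah u * (((wZ n ^ (s/2) : ℝ) : ℂ) * ah n)‖ + ‖intAU ah (Jpow s u) * ah n‖ := by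
            have := norm_sub_le D (intAU ah u * (((wZ n ^ (s/2) : ℝ) : ℂ) * ah n))
            linarith
    have ht2 : ‖intAU ah u * (((wZ n ^ (s/2) : ℝ) : ℂ) * ah n)‖
        = ‖intAU ah u‖ * (wZ n ^ (s/2) * ‖ah n‖) := by
      rw [norm_mul, norm_mul, Complex.norm_real, Real.norm_eq_abs, abs_of_nonneg (wZ_rpow_pos (s/2) n).le]
    have ht3 : ‖intAU ah (Jpow s u) * ah n‖
        = ‖intAU ah (Jpow s u)‖ * ‖ah n‖ := norm_mul _ _
    rw [ht2, ht3] at ht1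
    calc ‖D - intAU ah u * (((wZ n ^ (s/2) : ℝ) : ℂ) * ah n)
          + intAU ah (Jpow s u) * ah n‖
        ≤ ‖D‖ + ‖intAU ah u‖ * (wZ n ^ (s/2) * ‖ah n‖)
          + ‖intAU ah (Jpow s u)‖ * ‖ah n‖ := ht1
      _ ≤ P n + ‖intAU ah u‖ * (wZ n ^ (s/2) * ‖ah n‖)
          + ‖intAU ah (Jpow s u)‖ * ‖ah n‖ := by
          have := hDabs n
          linarith
  -- squared pointwise bound
  set I2 : ℝ := ‖intAU ah u‖ ^ 2 with hI2def
  set J2 : ℝ := ‖intAU ah (Jpow s u)‖ ^ 2 with hJ2def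
  have hsq : ∀ n, ‖Jpow s (Gcoef ah u) n - Gcoef ah (Jpow s u) n‖ ^ 2
      ≤ 3 * P n ^ 2 + 3 * I2 * (wZ n ^ s * ‖ah n‖ ^ 2)
        + 3 * J2 * ‖ah n‖ ^ 2 := by
    intro n
    have h1 := hcb n
    have h2 : ‖Jpow s (Gcoef ah u) n - Gcoef ah (Jpow s u) n‖ ^ 2
        ≤ (P n + ‖intAU ah u‖ * (wZ n ^ (s/2) * ‖ah n‖)
          + ‖intAU ah (Jpow s u)‖ * ‖ah n‖) ^ 2 :=
      pow_le_pow_left₀ (norm_nonneg _) h1 2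
    have h3 := three_sq (P n) (‖intAU ah u‖ * (wZ n ^ (s/2) * ‖ah n‖))
      (‖intAU ah (Jpow s u)‖ * ‖ah n‖)
    have hx2 : (‖intAU ah u‖ * (wZ n ^ (s/2) * ‖ah n‖)) ^ 2
        = I2 * (wZ n ^ s * ‖ah n‖ ^ 2) := by
      rw [hI2def]
      rw [mul_pow, mul_pow, wZ_rpow_sq, show (2:ℝ) * (s/2) = s by ring]
    have hy2 : (‖intAU ah (Jpow s u)‖ * ‖ah n‖) ^ 2
        = J2 * ‖ah n‖ ^ 2 := by
      rw [hJ2def, mul_pow]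
    rw [hx2, hy2] at h3
    calc ‖Jpow s (Gcoef ah u) n - Gcoef ah (Jpow s u) n‖ ^ 2
        ≤ 3 * (P n ^ 2 + I2 * (wZ n ^ s * ‖ah n‖ ^ 2)
          + J2 * ‖ah n‖ ^ 2) := le_trans h2 h3
      _ = 3 * P n ^ 2 + 3 * I2 * (wZ n ^ s * ‖ah n‖ ^ 2)
          + 3 * J2 * ‖ah n‖ ^ 2 := by ring
  -- Young's inequality for the main term
  obtain ⟨hPsum, hPle⟩ := young hb0 hv0 hb hv2
  -- sum everything
  have hRHSsum : Summable (fun n => 3 * P n ^ 2 + 3 * I2 * (wZ n ^ s * ‖ah n‖ ^ 2)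
      + 3 * J2 * ‖ah n‖ ^ 2) :=
    ((hPsum.mul_left 3).add (hA1sum.mul_left (3 * I2))).add (hA0sum.mul_left (3 * J2))
  have hQsum : Summable (fun n =>
      ‖Jpow s (Gcoef ah u) n - Gcoef ah (Jpow s u) n‖ ^ 2) :=
    Summable.of_nonneg_of_le (fun n => sq_nonneg _) hsq hRHSsum
  have hQle : ∑' n, ‖Jpow s (Gcoef ah u) n - Gcoef ah (Jpow s u) n‖ ^ 2
      ≤ 3 * (B ^ 2 * V) + 3 * I2 * A1 + 3 * J2 * A0 := by
    calc ∑' n, ‖Jpow s (Gcoef ah u) n - Gcoef ah (Jpow s u) n‖ ^ 2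
        ≤ ∑' n, (3 * P n ^ 2 + 3 * I2 * (wZ n ^ s * ‖ah n‖ ^ 2)
          + 3 * J2 * ‖ah n‖ ^ 2) := Summable.tsum_le_tsum hsq hQsum hRHSsum
      _ = 3 * (∑' n, P n ^ 2) + 3 * I2 * A1 + 3 * J2 * A0 := by
          rw [Summable.tsum_add ((hPsum.mul_left 3).add (hA1sum.mul_left (3 * I2)))
            (hA0sum.mul_left (3 * J2)),
            Summable.tsum_add (hPsum.mul_left 3) (hA1sum.mul_left (3 * I2)),
            tsum_mul_left, tsum_mul_left, tsum_mul_left, hA1def, hA0def]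
      _ ≤ 3 * (B ^ 2 * V) + 3 * I2 * A1 + 3 * J2 * A0 := by
          have h := hPle
          have hI20 : 0 ≤ I2 := sq_nonneg _
          have hJ20 : 0 ≤ J2 := sq_nonneg _
          nlinarith
  have hC0V : 3 * (B ^ 2 * V) + 3 * I2 * A1 + 3 * J2 * A0 ≤ C0 * V := by
    have h1 : 3 * I2 * A1 ≤ 3 * (4 * π^2 * E1 * V) * A1 := by
      apply mul_le_mul_of_nonneg_right _ hA1
      linarith [hIbound]
    have h2 : 3 * J2 * A0 ≤ 3 * (4 * π^2 * E2 * V) * A0 := by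
      apply mul_le_mul_of_nonneg_right _ hA0
      linarith [hJbound]
    rw [hC0def]
    nlinarith [h1, h2]
  -- conclude
  have hLHS : hNormSq 0 (fun n => Jpow s (Gcoef ah u) n - Gcoef ah (Jpow s u) n)
      = 2 * π * ∑' n, ‖Jpow s (Gcoef ah u) n - Gcoef ah (Jpow s u) n‖ ^ 2 := by
    simp only [hNormSq, Real.rpow_zero, one_mul]
  have hRHS : hNormSq (s - 1) u = 2 * π * V := by
    simp only [hNormSq, wZ_eq]
    rw [hVdef]
    congr 1
    exact (tsum_congr hvsq).symm
  rw [hLHS, hRHS]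
  have hchain : 2 * π * ∑' n, ‖Jpow s (Gcoef ah u) n - Gcoef ah (Jpow s u) n‖ ^ 2
      ≤ 2 * π * (C0 * V) := by
    apply mul_le_mul_of_nonneg_left _ (by positivity)
    exact le_trans hQle hC0V
  have hCsq : C0 ≤ (Real.sqrt C0 + 1) ^ 2 := by
    have h1 : Real.sqrt C0 ^ 2 = C0 := Real.sq_sqrt hC00
    nlinarith [Real.sqrt_nonneg C0]
  calc 2 * π * ∑' n, ‖Jpow s (Gcoef ah u) n - Gcoef ah (Jpow s u) n‖ ^ 2
      ≤ 2 * π * (C0 * V) := hchain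
    _ = C0 * (2 * π * V) := by ring
    _ ≤ (Real.sqrt C0 + 1) ^ 2 * (2 * π * V) := by
        apply mul_le_mul_of_nonneg_right hCsq (by positivity)
end
end
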